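/- arXiv:2604.01519 — 6 statements merged into one kernel-verified Lean document; each statement's English description precedes it below -/
import Mathlib

section
/- If f is a continuous real-valued function on [a,b], g is a polynomial of degree at most d, E = max_{x∈[a,b]} |f(x) - g(x)|, and there exist d+2 points a ≤ x₁ < x₂ < ... < x_{d+2} ≤ b and σ ∈ {−1, +1} with f(xᵢ) − g(xᵢ) = σ(−1)ⁱ E for all i, then g minimizes the uniform norm ‖f − p‖_∞ over all polynomials p of degree at most d (the 'sufficiency' direction of the Chebyshev Equioscillation Theorem). -/
/-- Sufficiency direction of the Chebyshev Equioscillation Theorem. -/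
theorem chebyshev_equioscillation_sufficiency
    (a b : ℝ) (hab : a < b) (f : ℝ → ℝ) (hf : ContinuousOn f (Set.Icc a b))
    (d : ℕ) (g : Polynomial ℝ) (hg : g.natDegree ≤ d)
    (E : ℝ) (hE : IsGreatest ((fun x => |f x - g.eval x|) '' Set.Icc a b) E)
    (x : Fin (d + 2) → ℝ) (hx : StrictMono x)
    (hxmem : ∀ i, x i ∈ Set.Icc a b)
    (σ : ℝ) (hσ : σ = 1 ∨ σ = -1)
    (hosc : ∀ i : Fin (d + 2), f (x i) - g.eval (x i) = σ * (-1) ^ ((i : ℕ) + 1) * E) :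
    ∀ p : Polynomial ℝ, p.natDegree ≤ d → ∃ y ∈ Set.Icc a b, E ≤ |f y - p.eval y| := by
  intro p hp
  by_contra hcon
  push_neg at hcon
  have hE0 : 0 < E := lt_of_le_of_lt (abs_nonneg _) (hcon a (Set.left_mem_Icc.mpr hab.le))
  set q := g - p with hq
  have hqdeg : q.natDegree ≤ d :=
    le_trans (Polynomial.natDegree_sub_le _ _) (max_le hg hp)
  set s : Fin (d+2) → ℝ := fun i => σ * (-1) ^ ((i:ℕ)+1) with hs
  have habs : ∀ i, |s i| = 1 := by
    intro i
    rcases hσ with h | h <;> simp [hs, h, abs_mul, abs_pow]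
  have hssq : ∀ i, s i * s i = 1 := by
    intro i
    rw [← abs_mul_abs_self, habs]; ring
  -- key sign fact
  have hsign : ∀ i, s i * q.eval (x i) < 0 := by
    intro i
    have hqe : q.eval (x i) = (f (x i) - p.eval (x i)) - s i * E := by
      have := hosc i
      simp only [hq, Polynomial.eval_sub, hs]
      linarith
    have h1 : s i * (f (x i) - p.eval (x i)) < E := by
      calc s i * (f (x i) - p.eval (x i)) ≤ |s i * (f (x i) - p.eval (x i))| := le_abs_self _
        _ = |f (x i) - p.eval (x i)| := by rw [abs_mul, habs, one_mul]
        _ < E := hcon _ (hxmem i)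
    have := hssq i
    rw [hqe]
    nlinarith
  -- alternation
  have halt : ∀ i : Fin (d+1), s i.succ = - s i.castSucc := by
    intro i
    simp only [hs, Fin.val_succ, Fin.coe_castSucc]
    ring
  -- opposite signs at consecutive points
  have hprod : ∀ i : Fin (d+1),
      q.eval (x i.castSucc) * q.eval (x i.succ) < 0 := by
    intro i
    have hA := hsign i.castSucc
    have hB := hsign i.succ
    rw [halt i] at hB
    have hsq := hssq i.castSucc
    nlinarith [mul_pos_of_neg_of_neg hA hB]
  -- roots via IVT
  have hqc : Continuous fun t => q.eval t := q.continuous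
  have hroot : ∀ i : Fin (d+1), ∃ y ∈ Set.Ioo (x i.castSucc) (x i.succ), q.eval y = 0 := by
    intro i
    have hlt : x i.castSucc < x i.succ := hx Fin.castSucc_lt_succ
    have hco : ContinuousOn (fun t => q.eval t) (Set.Icc (x i.castSucc) (x i.succ)) :=
      hqc.continuousOn
    rcases mul_neg_iff.mp (hprod i) with ⟨h1, h2⟩ | ⟨h1, h2⟩
    · have := intermediate_value_Ioo' hlt.le hco
      have h0 : (0:ℝ) ∈ Set.Ioo (q.eval (x i.succ)) (q.eval (x i.castSucc)) := ⟨h2, h1⟩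
      obtain ⟨y, hy1, hy2⟩ := this h0
      exact ⟨y, hy1, hy2⟩
    · have := intermediate_value_Ioo hlt.le hco
      have h0 : (0:ℝ) ∈ Set.Ioo (q.eval (x i.castSucc)) (q.eval (x i.succ)) := ⟨h1, h2⟩
      obtain ⟨y, hy1, hy2⟩ := this h0
      exact ⟨y, hy1, hy2⟩
  choose y hy hyz using hroot
  have hymono : StrictMono y := by
    intro i j hij
    have h1 : y i < x i.succ := (hy i).2
    have h2 : x j.castSucc < y j := (hy j).1
    have h3 : x i.succ ≤ x j.castSucc := by
      apply hx.monotone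
      rw [Fin.le_def]
      simp only [Fin.val_succ, Fin.coe_castSucc]
      exact Fin.lt_def.mp hij
    linarith
  have hq0 : q ≠ 0 := by
    intro h
    have := hsign 0
    rw [h] at this
    simp at this
  -- counting roots
  have hsub : Finset.univ.image y ⊆ q.roots.toFinset := by
    intro t ht
    obtain ⟨i, _, rfl⟩ := Finset.mem_image.mp ht
    rw [Multiset.mem_toFinset, Polynomial.mem_roots']
    exact ⟨hq0, by rw [Polynomial.IsRoot, hyz i]⟩
  have hcard : d + 1 ≤ q.roots.toFinset.card := by
    calc d + 1 = (Finset.univ.image y).card := by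
          rw [Finset.card_image_of_injective _ hymono.injective, Finset.card_univ,
            Fintype.card_fin]
        _ ≤ q.roots.toFinset.card := Finset.card_le_card hsub
  have hle : (q.roots.toFinset.card : ℕ) ≤ d := by
    calc q.roots.toFinset.card ≤ Multiset.card q.roots := Multiset.toFinset_card_le _
      _ ≤ q.natDegree := Polynomial.card_roots' q
      _ ≤ d := hqdeg
  omega
end

section
/- Let Δ be a real polynomial of degree exactly d ≥ 2 and suppose there exist d+1 points x₁ < ... < x_{d+1} at which Δ alternates sign with |Δ(xᵢ)| ≥ 1. Then the derivative Δ' has exactly d−1 real roots y₁ < ... < y_{d−1}, and at each such critical point |Δ(yⱼ)| ≥ 1, with the values Δ(yⱼ) alternating in sign. -/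
lemma exists_root_Ioo_aux (p : Polynomial ℝ) {a b : ℝ} (hab : a < b)
    (h : p.eval a * p.eval b < 0) : ∃ c ∈ Set.Ioo a b, p.eval c = 0 := by
  have hc : ContinuousOn (fun t => p.eval t) (Set.Icc a b) :=
    p.continuous.continuousOn
  rcases mul_neg_iff.mp h with ⟨hpa, hpb⟩ | ⟨hpa, hpb⟩
  · have := intermediate_value_Ioo' hab.le hc (Set.mem_Ioo.mpr ⟨hpb, hpa⟩ : (0:ℝ) ∈ _)
    obtain ⟨c, hcI, he⟩ := this
    exact ⟨c, hcI, he⟩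
  · have := intermediate_value_Ioo hab.le hc (Set.mem_Ioo.mpr ⟨hpa, hpb⟩ : (0:ℝ) ∈ _)
    obtain ⟨c, hcI, he⟩ := this
    exact ⟨c, hcI, he⟩

lemma same_sign_aux (p : Polynomial ℝ) {l u : ℝ}
    (h : ∀ z ∈ Set.Ioo l u, p.eval z ≠ 0) :
    ∀ a ∈ Set.Ioo l u, ∀ b ∈ Set.Ioo l u, 0 < p.eval a * p.eval b := by
  have key : ∀ a ∈ Set.Ioo l u, ∀ b ∈ Set.Ioo l u, a < b → 0 < p.eval a * p.eval b := by
    intro a ha b hb hab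
    by_contra hle
    have hne : p.eval a * p.eval b ≠ 0 := mul_ne_zero (h a ha) (h b hb)
    have hneg : p.eval a * p.eval b < 0 := lt_of_le_of_ne (not_lt.mp hle) hne
    obtain ⟨c, hcI, hc0⟩ := exists_root_Ioo_aux p hab hneg
    exact h c ⟨ha.1.trans hcI.1, hcI.2.trans hb.2⟩ hc0
  intro a ha b hb
  rcases lt_trichotomy a b with hlt | heq | hgt
  · exact key a ha b hb hlt
  · subst heq; exact mul_self_pos.mpr (h a ha)
  · rw [mul_comm]; exact key b hb a ha hgt

lemma roots_eq_val_aux (p : Polynomial ℝ) (hp : p ≠ 0) (S : Finset ℝ)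
    (hcard : p.natDegree ≤ S.card) (hS : ∀ s ∈ S, p.IsRoot s) :
    p.roots = S.val := by
  have hle : S.val ≤ p.roots := by
    rw [Multiset.le_iff_subset S.nodup]
    intro a haS
    exact Polynomial.mem_roots'.mpr ⟨hp, hS a haS⟩
  have hcard' : Multiset.card p.roots ≤ Multiset.card S.val := by
    calc Multiset.card p.roots ≤ p.natDegree := p.card_roots'
    _ ≤ S.card := hcard
  exact (Multiset.eq_of_le_of_card_le hle hcard').symm

/-- If `Δ` (degree `d ≥ 2`) alternates with magnitude `≥ 1` at `d+1` points, then
`Δ'` has exactly `d-1` real roots, and at each critical point `|Δ| ≥ 1` with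
alternating signs of the critical values. -/
theorem derivative_roots_of_alternating
    (d : ℕ) (hd : 2 ≤ d) (Δ : Polynomial ℝ) (hdeg : Δ.natDegree = d)
    (x : Fin (d + 1) → ℝ) (hx : StrictMono x)
    (halt : ∀ i : Fin d, Δ.eval (x i.castSucc) * Δ.eval (x i.succ) < 0)
    (hbig : ∀ i, 1 ≤ |Δ.eval (x i)|) :
    ∃ y : Fin (d - 1) → ℝ, StrictMono y ∧
      (∀ j, Δ.derivative.IsRoot (y j)) ∧
      (∀ z : ℝ, Δ.derivative.IsRoot z → ∃ j, z = y j) ∧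
      Multiset.card Δ.derivative.roots = d - 1 ∧
      (∀ j, 1 ≤ |Δ.eval (y j)|) ∧
      (∀ j : Fin (d - 1), ∀ hj : (j : ℕ) + 1 < d - 1,
        Δ.eval (y j) * Δ.eval (y ⟨(j : ℕ) + 1, hj⟩) < 0) := by
  have hΔ0 : Δ ≠ 0 := by
    intro h; rw [h, Polynomial.natDegree_zero] at hdeg; omega
  -- Step 1: roots r i of Δ, one in each interval
  have hroot : ∀ i : Fin d, ∃ c, c ∈ Set.Ioo (x i.castSucc) (x i.succ) ∧ Δ.eval c = 0 :=
    fun i => exists_root_Ioo_aux Δ (hx (show i.castSucc < i.succ from Fin.castSucc_lt_succ)) (halt i)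
  choose r hrI hr0 using hroot
  have hrmono : StrictMono r := by
    intro i j hij
    have h1 : x i.succ ≤ x j.castSucc := by
      apply hx.monotone
      rw [Fin.le_def]
      simp only [Fin.val_succ, Fin.coe_castSucc]
      exact Fin.lt_def.mp hij
    exact ((hrI i).2.trans_le h1).trans (hrI j).1
  -- Step 2: the roots of Δ are exactly the r i
  have hrinj : Function.Injective r := hrmono.injective
  have hRcard : (Finset.image r Finset.univ).card = d := by
    rw [Finset.card_image_of_injective _ hrinj, Finset.card_univ, Fintype.card_fin]
  have hΔroots : Δ.roots = (Finset.image r Finset.univ).val := by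
    apply roots_eq_val_aux Δ hΔ0 _ (by rw [hRcard, hdeg])
    intro s hs
    obtain ⟨i, _, rfl⟩ := Finset.mem_image.mp hs
    exact hr0 i
  have hrootmem : ∀ z : ℝ, Δ.IsRoot z → ∃ i, z = r i := by
    intro z hz
    have : z ∈ Δ.roots := Polynomial.mem_roots'.mpr ⟨hΔ0, hz⟩
    rw [hΔroots, Finset.mem_val, Finset.mem_image] at this
    obtain ⟨i, _, rfl⟩ := this
    exact ⟨i, rfl⟩
  -- no root of Δ strictly between consecutive r's
  have hnoroot : ∀ (j : ℕ) (h1 : j < d) (h2 : j + 1 < d),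
      ∀ z ∈ Set.Ioo (r ⟨j, h1⟩) (r ⟨j + 1, h2⟩), Δ.eval z ≠ 0 := by
    intro j h1 h2 z hz hz0
    obtain ⟨i, rfl⟩ := hrootmem z hz0
    have hl : (⟨j, h1⟩ : Fin d) < i := hrmono.lt_iff_lt.mp hz.1
    have hr : i < (⟨j + 1, h2⟩ : Fin d) := hrmono.lt_iff_lt.mp hz.2
    simp only [Fin.lt_def, Fin.val_mk] at hl hr
    omega
  -- Step 3: construct critical points y j as extrema of |Δ| on [r j, r (j+1)]
  have hy : ∀ j : Fin (d - 1), ∃ c,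
      c ∈ Set.Ioo (r ⟨(j : ℕ), by omega⟩) (r ⟨(j : ℕ) + 1, by omega⟩) ∧
      Δ.derivative.eval c = 0 ∧ 1 ≤ |Δ.eval c| ∧
      0 < Δ.eval c * Δ.eval (x ⟨(j : ℕ) + 1, by omega⟩) := by
    intro j
    have hjlt : (j : ℕ) < d - 1 := j.isLt
    set a := r ⟨(j : ℕ), by omega⟩ with ha_def
    set b := r ⟨(j : ℕ) + 1, by omega⟩ with hb_def
    have hab : a < b := hrmono (by simp only [Fin.lt_def, Fin.val_mk]; omega)
    have hxmid : x ⟨(j : ℕ) + 1, by omega⟩ ∈ Set.Ioo a b := by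
      constructor
      · have := (hrI ⟨(j : ℕ), by omega⟩).2
        exact this
      · have := (hrI ⟨(j : ℕ) + 1, by omega⟩).1
        exact this
    obtain ⟨c, hcIcc, hcmax⟩ := isCompact_Icc.exists_isMaxOn (Set.nonempty_Icc.mpr hab.le)
      ((continuous_abs.comp Δ.continuous).continuousOn :
        ContinuousOn (fun t => |Δ.eval t|) (Set.Icc a b))
    have hcbig : 1 ≤ |Δ.eval c| :=
      le_trans (hbig _) (hcmax (Set.mem_Icc_of_Ioo hxmid))
    have hcne : Δ.eval c ≠ 0 := by
      intro h; rw [h] at hcbig; norm_num at hcbig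
    have hca : c ≠ a := by
      intro h; rw [h, hr0] at hcne; exact hcne rfl
    have hcb : c ≠ b := by
      intro h; rw [h, hr0] at hcne; exact hcne rfl
    have hcIoo : c ∈ Set.Ioo a b :=
      ⟨lt_of_le_of_ne hcIcc.1 (Ne.symm hca), lt_of_le_of_ne hcIcc.2 hcb⟩
    have hnhds : Set.Icc a b ∈ nhds c := Icc_mem_nhds hcIoo.1 hcIoo.2
    have hderiv : Δ.derivative.eval c = 0 := by
      rcases lt_or_gt_of_ne hcne with hneg | hpos
      · have hmin : IsLocalMin (fun t => Δ.eval t) c := by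
          apply IsMinOn.isLocalMin _ hnhds
          intro z hz
          have h1 : |Δ.eval z| ≤ |Δ.eval c| := hcmax hz
          have h2 : |Δ.eval c| = -Δ.eval c := abs_of_neg hneg
          have h3 : -Δ.eval z ≤ |Δ.eval z| := neg_le_abs _
          simp only [Set.mem_setOf_eq]
          linarith
        have := hmin.deriv_eq_zero
        rwa [Polynomial.deriv] at this
      · have hmax : IsLocalMax (fun t => Δ.eval t) c := by
          apply IsMaxOn.isLocalMax _ hnhds
          intro z hz
          have h1 : |Δ.eval z| ≤ |Δ.eval c| := hcmax hz
          have h2 : |Δ.eval c| = Δ.eval c := abs_of_pos hpos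
          have h3 : Δ.eval z ≤ |Δ.eval z| := le_abs_self _
          simp only [Set.mem_setOf_eq]
          linarith
        have := hmax.deriv_eq_zero
        rwa [Polynomial.deriv] at this
    refine ⟨c, hcIoo, hderiv, hcbig, ?_⟩
    exact same_sign_aux Δ (hnoroot (j : ℕ) (by omega) (by omega)) c hcIoo _ hxmid
  choose y hyI hyD hybig hysign using hy
  have hymono : StrictMono y := by
    intro j k hjk
    have h1 : y j < r ⟨(j : ℕ) + 1, by omega⟩ := (hyI j).2
    have h2 : r ⟨(k : ℕ), by omega⟩ < y k := (hyI k).1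
    have h3 : r ⟨(j : ℕ) + 1, by omega⟩ ≤ r ⟨(k : ℕ), by omega⟩ := by
      apply hrmono.monotone
      simp only [Fin.le_def, Fin.val_mk]
      exact Fin.lt_def.mp hjk
    linarith
  -- Step 4: derivative has exactly these roots
  have hD0 : (0 : ℕ) < Δ.natDegree := by omega
  have hDdeg : Δ.derivative.degree = ((d - 1 : ℕ) : WithBot ℕ) := by
    rw [Polynomial.degree_derivative_eq Δ hD0, hdeg]
  have hDnatdeg : Δ.derivative.natDegree = d - 1 :=
    Polynomial.natDegree_eq_of_degree_eq_some hDdeg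
  have hD'0 : Δ.derivative ≠ 0 := by
    intro h
    rw [h, Polynomial.degree_zero] at hDdeg
    exact WithBot.bot_ne_coe hDdeg
  have hyinj : Function.Injective y := hymono.injective
  have hYcard : (Finset.image y Finset.univ).card = d - 1 := by
    rw [Finset.card_image_of_injective _ hyinj, Finset.card_univ, Fintype.card_fin]
  have hDroots : Δ.derivative.roots = (Finset.image y Finset.univ).val := by
    apply roots_eq_val_aux _ hD'0 _ (by rw [hYcard, hDnatdeg])
    intro s hs
    obtain ⟨i, _, rfl⟩ := Finset.mem_image.mp hs
    exact hyD i
  refine ⟨y, hymono, hyD, ?_, ?_, hybig, ?_⟩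
  · intro z hz
    have : z ∈ Δ.derivative.roots := Polynomial.mem_roots'.mpr ⟨hD'0, hz⟩
    rw [hDroots, Finset.mem_val, Finset.mem_image] at this
    obtain ⟨i, _, rfl⟩ := this
    exact ⟨i, rfl⟩
  · rw [hDroots]
    exact hYcard
  · intro j hj
    have h1 := hysign j
    have h2 := hysign ⟨(j : ℕ) + 1, hj⟩
    have h3 : Δ.eval (x ⟨(j : ℕ) + 1, by omega⟩) * Δ.eval (x ⟨(j : ℕ) + 2, by omega⟩) < 0 := by
      have := halt ⟨(j : ℕ) + 1, by omega⟩
      convert this using 3 <;> rfl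
    simp only at h1 h2
    nlinarith [mul_pos h1 h2]
end

section
/- Let A_θ be the m×m periodic Jacobi matrix with real diagonal entries a₁,...,a_m, positive off-diagonal entries b₁,...,b_{m−1} on the sub/superdiagonal, and corner entries b_m e^{iθ} (top-right) and b_m e^{−iθ} (bottom-left), with b_m > 0. Then the characteristic polynomial satisfies det(xI − A_θ) = h(x) − e·cos θ, where e = 2·b₁b₂···b_m and h(x) is a monic real polynomial of degree m independent of θ; explicitly h(x) = det(xI − B) − b_m²·det(xI − C), with B the tridiagonal matrix obtained from A_θ by setting b_m = 0, and C the tridiagonal matrix obtained by deleting the first and last rows and columns. -/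
/-- Real symmetric tridiagonal matrix (as a complex matrix) with diagonal `a`
and off-diagonal `b` (only `b i` with `i + 1 < m` is used). -/
def tridiag (m : ℕ) (a b : Fin m → ℝ) : Matrix (Fin m) (Fin m) ℂ :=
  Matrix.of fun i j =>
    if (i : ℕ) = (j : ℕ) then (a i : ℂ)
    else if (i : ℕ) + 1 = (j : ℕ) then (b i : ℂ)
    else if (j : ℕ) + 1 = (i : ℕ) then (b j : ℂ)
    else 0

/-- The `m × m` periodic Jacobi matrix with diagonal `a`, off-diagonal `b`, and
corner entries `b m e^{± i θ}`. -/
noncomputable def periodicJacobi (m : ℕ) (a b : Fin m → ℝ) (θ : ℝ) : Matrix (Fin m) (Fin m) ℂ :=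
  Matrix.of fun i j =>
    if (i : ℕ) = (j : ℕ) then (a i : ℂ)
    else if (i : ℕ) + 1 = (j : ℕ) then (b i : ℂ)
    else if (j : ℕ) + 1 = (i : ℕ) then (b j : ℂ)
    else if (i : ℕ) = 0 ∧ (j : ℕ) = m - 1 then
      (b ⟨m - 1, Nat.sub_lt i.pos one_pos⟩ : ℂ) * Complex.exp (Complex.I * θ)
    else if (j : ℕ) = 0 ∧ (i : ℕ) = m - 1 then
      (b ⟨m - 1, Nat.sub_lt i.pos one_pos⟩ : ℂ) * Complex.exp (-(Complex.I * θ))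
    else 0

/-- Real version of `tridiag`. -/
def tridiagR (m : ℕ) (a b : Fin m → ℝ) : Matrix (Fin m) (Fin m) ℝ :=
  Matrix.of fun i j =>
    if (i : ℕ) = (j : ℕ) then a i
    else if (i : ℕ) + 1 = (j : ℕ) then b i
    else if (j : ℕ) + 1 = (i : ℕ) then b j
    else 0

lemma tridiag_eq_map (m : ℕ) (a b : Fin m → ℝ) :
    tridiag m a b = (tridiagR m a b).map (algebraMap ℝ ℂ) := by
  ext i j
  simp only [tridiag, tridiagR, Matrix.map_apply, Matrix.of_apply]
  split_ifs <;> simp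

lemma eval_charpoly' {n : Type*} [DecidableEq n] [Fintype n] {R : Type*} [CommRing R]
    (M : Matrix n n R) (x : R) :
    (M.charpoly).eval x = (x • (1 : Matrix n n R) - M).det := by
  rw [Matrix.charpoly, ← Polynomial.coe_evalRingHom, RingHom.map_det]
  congr 1
  ext i j
  by_cases h : i = j <;>
    simp [h, Matrix.charmatrix_apply, Matrix.one_apply, Matrix.diagonal_apply]

lemma det_map_ofReal {n : ℕ} (M : Matrix (Fin n) (Fin n) ℝ) (x : ℝ) :
    (((x • (1 : Matrix (Fin n) (Fin n) ℝ) - M).det : ℝ) : ℂ)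
      = ((x : ℂ) • (1 : Matrix (Fin n) (Fin n) ℂ) - M.map (algebraMap ℝ ℂ)).det := by
  rw [show ((((x • (1 : Matrix (Fin n) (Fin n) ℝ) - M).det : ℝ) : ℂ))
      = (algebraMap ℝ ℂ) ((x • (1 : Matrix (Fin n) (Fin n) ℝ) - M).det) from rfl,
    RingHom.map_det]
  congr 1
  ext i j
  simp [Matrix.map_apply, Matrix.one_apply, apply_ite, smul_eq_mul]

lemma sub_tridiag_apply (m : ℕ) (a b : Fin m → ℝ) (x : ℂ) (p q : Fin m) :
    (x • (1 : Matrix (Fin m) (Fin m) ℂ) - tridiag m a b) p q =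
      if (p : ℕ) = (q : ℕ) then x - (a p : ℂ)
      else if (p : ℕ) + 1 = (q : ℕ) then -(b p : ℂ)
      else if (q : ℕ) + 1 = (p : ℕ) then -(b q : ℂ)
      else 0 := by
  simp only [Matrix.sub_apply, Matrix.smul_apply, Matrix.one_apply, tridiag, Matrix.of_apply,
    Fin.ext_iff, smul_eq_mul]
  split_ifs <;> simp

lemma det_row_single {R : Type*} [CommRing R] {n : ℕ} (A : Matrix (Fin (n+1)) (Fin (n+1)) R)
    (i j0 : Fin (n+1)) (hA : ∀ j, j ≠ j0 → A i j = 0) :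
    A.det = (-1) ^ ((i : ℕ) + (j0 : ℕ)) * A i j0 *
      (A.submatrix i.succAbove j0.succAbove).det := by
  rw [Matrix.det_succ_row A i, Finset.sum_eq_single j0]
  · intro j _ hj
    rw [hA j hj, mul_zero, zero_mul]
  · intro h; exact absurd (Finset.mem_univ j0) h

-- key determinant identity
lemma key (k : ℕ) (a b : Fin (k+3) → ℝ) (θ x : ℝ) :
    ((x : ℂ) • (1 : Matrix (Fin (k+3)) (Fin (k+3)) ℂ) - periodicJacobi (k+3) a b θ).det
      = ((x : ℂ) • (1 : Matrix (Fin (k+3)) (Fin (k+3)) ℂ) - tridiag (k+3) a b).det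
        - (b ⟨k+2, by omega⟩ : ℂ) ^ 2 *
            ((x : ℂ) • (1 : Matrix (Fin (k+1)) (Fin (k+1)) ℂ)
              - tridiag (k+1) (fun i => a ⟨(i : ℕ) + 1, by omega⟩)
                  (fun i => b ⟨(i : ℕ) + 1, by omega⟩)).det
        - (2 * ∏ t, (b t : ℂ)) * (Real.cos θ : ℂ) := by
  set c1 : ℂ := (b ⟨k+2, by omega⟩ : ℂ) * Complex.exp (Complex.I * θ) with hc1
  set c2 : ℂ := (b ⟨k+2, by omega⟩ : ℂ) * Complex.exp (-(Complex.I * θ)) with hc2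
  set T : Matrix (Fin (k+3)) (Fin (k+3)) ℂ :=
    (x : ℂ) • (1 : Matrix (Fin (k+3)) (Fin (k+3)) ℂ) - tridiag (k+3) a b with hT
  set lS : Fin (k+3) := Fin.last (k+2) with hlS
  set u : Fin (k+3) → ℂ := Pi.single lS (-c1) with hu
  set v : Fin (k+3) → ℂ := Pi.single 0 (-c2) with hv
  have h0l : (0 : Fin (k+3)) ≠ lS := by simp [hlS, Fin.ext_iff]
  -- entry formula for the periodic Jacobi matrix
  have hpj : ∀ p q : Fin (k+3),
      ((x : ℂ) • (1 : Matrix (Fin (k+3)) (Fin (k+3)) ℂ) - periodicJacobi (k+3) a b θ) p q =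
        if (p : ℕ) = (q : ℕ) then (x : ℂ) - (a p : ℂ)
        else if (p : ℕ) + 1 = (q : ℕ) then -(b p : ℂ)
        else if (q : ℕ) + 1 = (p : ℕ) then -(b q : ℂ)
        else if (p : ℕ) = 0 ∧ (q : ℕ) = k + 2 then -c1
        else if (q : ℕ) = 0 ∧ (p : ℕ) = k + 2 then -c2
        else 0 := by
    intro p q
    simp only [Matrix.sub_apply, Matrix.smul_apply, Matrix.one_apply, periodicJacobi,
      Matrix.of_apply, Fin.ext_iff, smul_eq_mul, hc1, hc2]
    split_ifs <;> first | omega | simp | (exfalso; omega)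
  -- decomposition of the matrix
  have hM : (x : ℂ) • (1 : Matrix (Fin (k+3)) (Fin (k+3)) ℂ) - periodicJacobi (k+3) a b θ
      = (T.updateRow 0 (T 0 + u)).updateRow lS (T lS + v) := by
    ext i j
    rw [hpj]
    rcases eq_or_ne i lS with rfl | hil
    · rw [Matrix.updateRow_self]
      simp only [Pi.add_apply, hv, Pi.single_apply, hT, sub_tridiag_apply, hlS, Fin.val_last,
        Fin.ext_iff, Fin.val_zero, and_true, true_and, false_and, and_false, if_false, if_true]
      split_ifs <;> first | omega | exact (‹False›).elim | ring1
    · rw [Matrix.updateRow_ne hil]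
      have hil' : (i : ℕ) ≠ k + 2 := by
        intro h; exact hil (Fin.ext (by simp [h, hlS]))
      rcases eq_or_ne i 0 with rfl | hi0
      · rw [Matrix.updateRow_self]
        simp only [Pi.add_apply, hu, Pi.single_apply, hT, sub_tridiag_apply, hlS, Fin.val_last,
          Fin.ext_iff, Fin.val_zero, and_true, true_and, false_and, and_false, if_false, if_true]
        split_ifs <;> first | omega | exact (‹False›).elim | ring1
      · rw [Matrix.updateRow_ne hi0]
        have hi0' : (i : ℕ) ≠ 0 := by
          intro h; exact hi0 (Fin.ext (by simp [h]))
        simp only [hT, sub_tridiag_apply]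
        split_ifs <;> first | omega | rfl
  -- determinant splits into four pieces
  have hsplit : ((x : ℂ) • (1 : Matrix (Fin (k+3)) (Fin (k+3)) ℂ)
        - periodicJacobi (k+3) a b θ).det
      = T.det + (T.updateRow 0 u).det + (T.updateRow lS v).det
        + ((T.updateRow 0 u).updateRow lS v).det := by
    have hcomm : ∀ (r s : Fin (k+3) → ℂ),
        (T.updateRow 0 r).updateRow lS s = (T.updateRow lS s).updateRow 0 r := by
      intro r s
      ext i j
      rcases eq_or_ne i lS with rfl | hil
      · simp [Matrix.updateRow_apply, Ne.symm h0l]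
      rcases eq_or_ne i 0 with rfl | hi0
      · simp [Matrix.updateRow_apply, h0l]
      · simp [Matrix.updateRow_apply, hil, hi0]
    have hrow : (T.updateRow 0 (T 0 + u)) lS = T lS := Matrix.updateRow_ne (Ne.symm h0l)
    have hrow0 : (T.updateRow lS v) 0 = T 0 := Matrix.updateRow_ne h0l
    have d1 : ((T.updateRow 0 (T 0 + u)).updateRow lS (T lS + v)).det
        = ((T.updateRow 0 (T 0 + u)).updateRow lS (T lS)).det
          + ((T.updateRow 0 (T 0 + u)).updateRow lS v).det :=
      Matrix.det_updateRow_add _ _ _ _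
    have e1 : (T.updateRow 0 (T 0 + u)).updateRow lS (T lS)
        = T.updateRow 0 (T 0 + u) := by
      rw [← hrow]; exact Matrix.updateRow_eq_self _ _
    have d2 : (T.updateRow 0 (T 0 + u)).det
        = T.det + (T.updateRow 0 u).det := by
      rw [Matrix.det_updateRow_add, Matrix.updateRow_eq_self]
    have d3 : ((T.updateRow 0 (T 0 + u)).updateRow lS v).det
        = (T.updateRow lS v).det + ((T.updateRow 0 u).updateRow lS v).det := by
      rw [hcomm (T 0 + u) v, ← hrow0, Matrix.det_updateRow_add,
        Matrix.updateRow_eq_self, ← hcomm]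
    rw [hM, d1, e1, d2, d3]
    ring
  -- helpers
  have prodneg : ∀ (n : ℕ) (f : Fin n → ℂ), (∏ i, -f i) = (-1)^n * ∏ i, f i := by
    intro n f
    calc (∏ i, -f i) = ∏ i, (-1 : ℂ) * f i := by simp only [neg_one_mul]
    _ = (∏ _i : Fin n, (-1 : ℂ)) * ∏ i, f i := Finset.prod_mul_distrib
    _ = (-1)^n * ∏ i, f i := by simp
  have prodsplit : (∏ t, ((b t : ℝ) : ℂ))
      = (∏ i : Fin (k+2), ((b i.castSucc : ℝ) : ℂ)) * ((b (Fin.last (k+2)) : ℝ) : ℂ) :=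
    Fin.prod_univ_castSucc _
  have hsq : ((-1 : ℂ))^(k+2) * ((-1 : ℂ))^(k+2) = 1 := by
    rw [← pow_add]; exact Even.neg_one_pow ⟨k+2, by ring⟩
  have hodd : ((-1 : ℂ))^(k+2) * ((-1 : ℂ))^(k+1) = -1 := by
    rw [← pow_add]; exact Odd.neg_one_pow ⟨k+1, by ring⟩
  -- D3 : top corner row
  have hD3 : (T.updateRow 0 u).det
      = -(Complex.exp (Complex.I * θ) * ∏ t, ((b t : ℝ) : ℂ)) := by
    have hzero : ∀ j, j ≠ lS → (T.updateRow 0 u) 0 j = 0 := by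
      intro j hj
      rw [Matrix.updateRow_self, hu]
      exact Pi.single_eq_of_ne hj _
    rw [det_row_single _ 0 lS hzero, Matrix.updateRow_self]
    have hsub : (T.updateRow 0 u).submatrix ((0 : Fin (k+3)).succAbove) (lS.succAbove)
        = Matrix.of (fun i j : Fin (k+2) => T i.succ j.castSucc) := by
      ext i j
      simp only [Matrix.submatrix_apply, hlS, Fin.succAbove_last, Fin.succAbove_zero,
        Matrix.of_apply]
      exact congrFun (Matrix.updateRow_ne (Fin.succ_ne_zero i)) _
    rw [hsub]
    have tri : (Matrix.of (fun i j : Fin (k+2) => T i.succ j.castSucc)).BlockTriangular id := by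
      intro i j hij
      have hij' : (j : ℕ) < (i : ℕ) := hij
      rw [Matrix.of_apply, hT, sub_tridiag_apply]
      simp only [Fin.val_succ, Fin.coe_castSucc]
      split_ifs <;> first | omega | rfl
    rw [Matrix.det_of_upperTriangular tri]
    have diag : ∀ i : Fin (k+2),
        (Matrix.of (fun i j : Fin (k+2) => T i.succ j.castSucc)) i i
          = -((b i.castSucc : ℝ) : ℂ) := by
      intro i
      rw [Matrix.of_apply, hT, sub_tridiag_apply]
      simp only [Fin.val_succ, Fin.coe_castSucc]
      rw [if_neg (by omega), if_neg (by omega), if_pos trivial]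
    rw [Finset.prod_congr rfl (fun i _ => diag i), prodneg, hu, Pi.single_eq_same, hc1]
    simp only [Fin.val_zero, hlS, Fin.val_last, zero_add]
    rw [prodsplit, show ((b (Fin.last (k+2)) : ℝ) : ℂ) = ((b ⟨k+2, by omega⟩ : ℝ) : ℂ) from rfl]
    linear_combination (-(((b ⟨k+2, by omega⟩ : ℝ) : ℂ) * Complex.exp (Complex.I * θ) *
      ∏ i : Fin (k+2), ((b i.castSucc : ℝ) : ℂ))) * hsq
  -- D2 : bottom corner row
  have hD2 : (T.updateRow lS v).det
      = -(Complex.exp (-(Complex.I * θ)) * ∏ t, ((b t : ℝ) : ℂ)) := by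
    have hzero : ∀ j, j ≠ 0 → (T.updateRow lS v) lS j = 0 := by
      intro j hj
      rw [Matrix.updateRow_self, hv]
      exact Pi.single_eq_of_ne hj _
    rw [det_row_single _ lS 0 hzero, Matrix.updateRow_self]
    have hsub : (T.updateRow lS v).submatrix (lS.succAbove) ((0 : Fin (k+3)).succAbove)
        = Matrix.of (fun i j : Fin (k+2) => T i.castSucc j.succ) := by
      ext i j
      simp only [Matrix.submatrix_apply, hlS, Fin.succAbove_last, Fin.succAbove_zero,
        Matrix.of_apply]
      exact congrFun (Matrix.updateRow_ne (Fin.castSucc_lt_last i).ne) _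
    rw [hsub]
    have tri : (Matrix.of (fun i j : Fin (k+2) => T i.castSucc j.succ)).BlockTriangular
        OrderDual.toDual := by
      intro i j hij
      have hij' : (i : ℕ) < (j : ℕ) := hij
      rw [Matrix.of_apply, hT, sub_tridiag_apply]
      simp only [Fin.val_succ, Fin.coe_castSucc]
      split_ifs <;> first | omega | rfl
    rw [Matrix.det_of_lowerTriangular _ tri]
    have diag : ∀ i : Fin (k+2),
        (Matrix.of (fun i j : Fin (k+2) => T i.castSucc j.succ)) i i
          = -((b i.castSucc : ℝ) : ℂ) := by
      intro i
      rw [Matrix.of_apply, hT, sub_tridiag_apply]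
      simp only [Fin.val_succ, Fin.coe_castSucc]
      rw [if_neg (by omega), if_pos trivial]
    rw [Finset.prod_congr rfl (fun i _ => diag i), prodneg, hv, Pi.single_eq_same, hc2]
    simp only [Fin.val_zero, hlS, Fin.val_last, add_zero]
    rw [prodsplit, show ((b (Fin.last (k+2)) : ℝ) : ℂ) = ((b ⟨k+2, by omega⟩ : ℝ) : ℂ) from rfl]
    linear_combination (-(((b ⟨k+2, by omega⟩ : ℝ) : ℂ) * Complex.exp (-(Complex.I * θ)) *
      ∏ i : Fin (k+2), ((b i.castSucc : ℝ) : ℂ))) * hsq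
  -- D4 : both corner rows
  have hD4 : ((T.updateRow 0 u).updateRow lS v).det
      = -(((b ⟨k+2, by omega⟩ : ℝ) : ℂ)^2 *
          ((x : ℂ) • (1 : Matrix (Fin (k+1)) (Fin (k+1)) ℂ)
            - tridiag (k+1) (fun i => a ⟨(i : ℕ) + 1, by omega⟩)
                (fun i => b ⟨(i : ℕ) + 1, by omega⟩)).det) := by
    set A := (T.updateRow 0 u).updateRow lS v with hA
    have hrowA : A 0 = u := by
      rw [hA, Matrix.updateRow_ne h0l, Matrix.updateRow_self]
    have hzero : ∀ j, j ≠ lS → A 0 j = 0 := by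
      intro j hj
      rw [hrowA, hu]
      exact Pi.single_eq_of_ne hj _
    rw [det_row_single _ 0 lS hzero, hrowA, hu, Pi.single_eq_same]
    set B := A.submatrix ((0 : Fin (k+3)).succAbove) (lS.succAbove) with hB
    have hrowB : ∀ j : Fin (k+2), B (Fin.last (k+1)) j = v j.castSucc := by
      intro j
      rw [hB, Matrix.submatrix_apply]
      simp only [hlS, Fin.succAbove_last, Fin.succAbove_zero]
      rw [Fin.succ_last, hA, Matrix.updateRow_self]
    have hzero2 : ∀ j, j ≠ 0 → B (Fin.last (k+1)) j = 0 := by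
      intro j hj
      rw [hrowB, hv]
      have hcj : (j.castSucc : ℕ) ≠ 0 := by
        exact fun h => hj (Fin.ext (h.trans (show ((0 : Fin (k+2)) : ℕ) = 0 by simp).symm))
      exact Pi.single_eq_of_ne (fun hc => hcj (by rw [hc]; rfl)) _
    rw [det_row_single _ (Fin.last (k+1)) 0 hzero2, hrowB]
    have hv0 : v ((0 : Fin (k+2)).castSucc) = -c2 := by
      rw [show ((0 : Fin (k+2)).castSucc) = (0 : Fin (k+3)) from rfl, hv]
      exact Pi.single_eq_same _ _
    rw [hv0]
    have hmid : B.submatrix ((Fin.last (k+1)).succAbove) ((0 : Fin (k+2)).succAbove)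
        = (x : ℂ) • (1 : Matrix (Fin (k+1)) (Fin (k+1)) ℂ)
            - tridiag (k+1) (fun i => a ⟨(i : ℕ) + 1, by omega⟩)
                (fun i => b ⟨(i : ℕ) + 1, by omega⟩) := by
      ext i j
      rw [Matrix.submatrix_apply, hB, Matrix.submatrix_apply]
      simp only [hlS, Fin.succAbove_last, Fin.succAbove_zero]
      have hne1 : (i.castSucc.succ : Fin (k+3)) ≠ lS := by
        simp only [hlS, ne_eq, Fin.ext_iff, Fin.val_succ, Fin.coe_castSucc, Fin.val_last]
        omega
      rw [hA, Matrix.updateRow_ne hne1, Matrix.updateRow_ne (Fin.succ_ne_zero _)]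
      rw [hT, sub_tridiag_apply, sub_tridiag_apply]
      simp only [Fin.val_succ, Fin.coe_castSucc]
      split_ifs <;> first | omega | rfl
    rw [hmid]
    have hcc : c1 * c2 = ((b ⟨k+2, by omega⟩ : ℝ) : ℂ)^2 := by
      rw [hc1, hc2, show ((b ⟨k+2, by omega⟩ : ℝ) : ℂ) * Complex.exp (Complex.I * θ) *
          (((b ⟨k+2, by omega⟩ : ℝ) : ℂ) * Complex.exp (-(Complex.I * θ)))
        = ((b ⟨k+2, by omega⟩ : ℝ) : ℂ)^2 *
          (Complex.exp (Complex.I * θ) * Complex.exp (-(Complex.I * θ))) from by ring,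
        ← Complex.exp_add, add_neg_cancel, Complex.exp_zero, mul_one]
    simp only [Fin.val_zero, hlS, Fin.val_last, zero_add, add_zero]
    linear_combination (((x : ℂ) • (1 : Matrix (Fin (k+1)) (Fin (k+1)) ℂ)
            - tridiag (k+1) (fun i => a ⟨(i : ℕ) + 1, by omega⟩)
                (fun i => b ⟨(i : ℕ) + 1, by omega⟩)).det) *
      ((-1 : ℂ))^(k+2) * ((-1 : ℂ))^(k+1) * hcc
      + (((x : ℂ) • (1 : Matrix (Fin (k+1)) (Fin (k+1)) ℂ)
            - tridiag (k+1) (fun i => a ⟨(i : ℕ) + 1, by omega⟩)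
                (fun i => b ⟨(i : ℕ) + 1, by omega⟩)).det) *
        ((b ⟨k+2, by omega⟩ : ℝ) : ℂ)^2 * hodd
  -- assemble
  have hcos : Complex.exp (Complex.I * θ) + Complex.exp (-(Complex.I * θ))
      = 2 * ((Real.cos θ : ℝ) : ℂ) := by
    rw [Complex.ofReal_cos, Complex.two_cos]
    ring_nf
  rw [hsplit, hD3, hD2, hD4]
  rw [hT]
  linear_combination (-(∏ t, ((b t : ℝ) : ℂ))) * hcos


set_option maxHeartbeats 1600000 in
/-- Characteristic polynomial of a periodic Jacobi matrix:
`det(xI − A_θ) = h(x) − e cos θ` with `h` monic of degree `m` independent of `θ`,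
`h(x) = det(xI − B) − b_m² det(xI − C)`, `e = 2 b₁ ⋯ b_m`. -/
theorem periodicJacobi_charpoly
    (m : ℕ) (hm : 3 ≤ m) (a b : Fin m → ℝ) (hb : ∀ t, 0 < b t)
    (θ : ℝ) (hθ : θ ∈ Set.Ico 0 (2 * Real.pi)) :
    ∃ h : Polynomial ℝ, h.Monic ∧ h.natDegree = m ∧
      (∀ x : ℝ,
        ((x : ℂ) • (1 : Matrix (Fin m) (Fin m) ℂ) - periodicJacobi m a b θ).det
          = ((h.eval x : ℝ) : ℂ) - (2 * ∏ t, (b t : ℂ)) * (Real.cos θ : ℂ)) ∧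
      (∀ x : ℝ,
        ((h.eval x : ℝ) : ℂ)
          = ((x : ℂ) • (1 : Matrix (Fin m) (Fin m) ℂ) - tridiag m a b).det
            - (b ⟨m - 1, by omega⟩ : ℂ) ^ 2 *
              ((x : ℂ) • (1 : Matrix (Fin (m - 2)) (Fin (m - 2)) ℂ)
                - tridiag (m - 2) (fun i => a ⟨(i : ℕ) + 1, by omega⟩)
                    (fun i => b ⟨(i : ℕ) + 1, by omega⟩)).det) := by
  obtain ⟨k, rfl⟩ : ∃ k, m = k + 3 := ⟨m - 3, by omega⟩
  set p : Polynomial ℝ := (tridiagR (k+3) a b).charpoly with hp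
  set q : Polynomial ℝ := (tridiagR (k+1) (fun i => a ⟨(i : ℕ) + 1, by omega⟩)
      (fun i => b ⟨(i : ℕ) + 1, by omega⟩)).charpoly with hq
  set c : ℝ := (b ⟨k+2, by omega⟩)^2 with hc
  have hpm : p.Monic := Matrix.charpoly_monic _
  have hqm : q.Monic := Matrix.charpoly_monic _
  have hpd : p.natDegree = k + 3 := by
    rw [hp, Matrix.charpoly_natDegree_eq_dim, Fintype.card_fin]
  have hqd : q.natDegree = k + 1 := by
    rw [hq, Matrix.charpoly_natDegree_eq_dim, Fintype.card_fin]
  have hlt : (Polynomial.C c * q).natDegree < p.natDegree := by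
    have := Polynomial.natDegree_C_mul_le c q
    omega
  have hdeg : (Polynomial.C c * q).degree < p.degree := by
    have h1 : (Polynomial.C c * q).degree ≤ ((k+1 : ℕ) : WithBot ℕ) := by
      refine le_trans (Polynomial.degree_mul_le _ _) ?_
      refine le_trans (add_le_add Polynomial.degree_C_le
        Polynomial.degree_le_natDegree) ?_
      rw [hqd, zero_add]
    have h2 : p.degree = ((k+3 : ℕ) : WithBot ℕ) := by
      rw [Polynomial.degree_eq_natDegree hpm.ne_zero, hpd]
    rw [h2]
    refine lt_of_le_of_lt h1 ?_
    exact_mod_cast (by omega : k + 1 < k + 3)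
  have hev : ∀ x : ℝ, (((p - Polynomial.C c * q).eval x : ℝ) : ℂ)
      = ((x : ℂ) • (1 : Matrix (Fin (k+3)) (Fin (k+3)) ℂ) - tridiag (k+3) a b).det
        - (b ⟨k+2, by omega⟩ : ℂ) ^ 2 *
          ((x : ℂ) • (1 : Matrix (Fin (k+1)) (Fin (k+1)) ℂ)
            - tridiag (k+1) (fun i => a ⟨(i : ℕ) + 1, by omega⟩)
                (fun i => b ⟨(i : ℕ) + 1, by omega⟩)).det := by
    intro x
    rw [Polynomial.eval_sub, Polynomial.eval_mul, Polynomial.eval_C]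
    push_cast
    simp only [hp, hq]
    rw [eval_charpoly']
    rw [eval_charpoly']
    rw [det_map_ofReal]
    rw [det_map_ofReal]
    rw [← tridiag_eq_map]
    rw [← tridiag_eq_map]
    rw [hc]
    push_cast
    ring
  refine ⟨p - Polynomial.C c * q, hpm.sub_of_left hdeg, ?_, ?_, ?_⟩
  · rw [Polynomial.natDegree_sub_eq_left_of_natDegree_lt hlt, hpd]
  · intro x
    rw [key k a b θ x, hev x]
  · intro x
    exact hev x
end

section
/- Let f : [a,b] ⊆ [−1,1] → ℝ be continuous, d ≥ 1, and suppose P* is a best degree-(d−1) approximation to f with error E_{d−1} attaining the equioscillation property at points x₁ < ... < x_{d+1} with f(xᵢ) − P*(xᵢ) = (−1)ⁱ E_{d−1}. Let g be a polynomial of degree ≤ d with sup_{x∈[a,b]} |f(x) − g(x)| ≤ η where η < E_{d−1}, and assume g ≠ P*. Define Δ(x) = (g(x) − P*(x)) / (E_{d−1} − η). Then Δ(xᵢ) has sign (−1)ⁱ and |Δ(xᵢ)| ≥ 1 for every i = 1, ..., d+1; in particular Δ has degree exactly d and d real roots interlacing the points xᵢ. -/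
/-- If `P*` equioscillates against `f` at `d+1` points with error `E` and `g`
approximates `f` within `η < E`, then `Δ = (g − P*)/(E − η)` has sign `(−1)ⁱ`
and magnitude `≥ 1` at each point; in particular `Δ` has degree exactly `d` and
`d` real roots interlacing the points. -/
theorem scaled_difference_oscillates
    (a b : ℝ) (hab : a < b) (hsub : Set.Icc a b ⊆ Set.Icc (-1 : ℝ) 1)
    (f : ℝ → ℝ) (hf : ContinuousOn f (Set.Icc a b))
    (d : ℕ) (hd : 1 ≤ d)
    (P : Polynomial ℝ) (hP : P.natDegree ≤ d - 1)
    (E : ℝ) (hEbound : ∀ y ∈ Set.Icc a b, |f y - P.eval y| ≤ E)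
    (x : Fin (d + 1) → ℝ) (hx : StrictMono x) (hxmem : ∀ i, x i ∈ Set.Icc a b)
    (hosc : ∀ i : Fin (d + 1), f (x i) - P.eval (x i) = (-1 : ℝ) ^ ((i : ℕ) + 1) * E)
    (g : Polynomial ℝ) (hg : g.natDegree ≤ d)
    (η : ℝ) (hη : 0 < η) (hηE : η < E)
    (hgapp : ∀ y ∈ Set.Icc a b, |f y - g.eval y| ≤ η)
    (hne : g ≠ P) :
    (∀ i : Fin (d + 1), 1 ≤ |((E - η)⁻¹ • (g - P)).eval (x i)| ∧
        0 < (-1 : ℝ) ^ ((i : ℕ) + 1) * ((E - η)⁻¹ • (g - P)).eval (x i)) ∧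
      ((E - η)⁻¹ • (g - P)).natDegree = d ∧
      ∃ r : Fin d → ℝ, (∀ i : Fin d, r i ∈ Set.Ioo (x i.castSucc) (x i.succ)) ∧
        ∀ i, ((E - η)⁻¹ • (g - P)).IsRoot (r i) := by
  set Q : Polynomial ℝ := (E - η)⁻¹ • (g - P) with hQ
  have hEη : (0 : ℝ) < E - η := by linarith
  -- key sign estimate
  have key : ∀ i : Fin (d + 1),
      E - η ≤ (-1 : ℝ) ^ ((i : ℕ) + 1) * (g - P).eval (x i) := by
    intro i
    have h1 := hgapp (x i) (hxmem i)
    have h2 := hosc i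
    rw [abs_le] at h1
    have heval : (g - P).eval (x i) = (g.eval (x i) - f (x i)) + (f (x i) - P.eval (x i)) := by
      simp
    rcases Nat.even_or_odd ((i : ℕ) + 1) with h | h
    · rw [h.neg_one_pow] at h2 ⊢; nlinarith
    · rw [h.neg_one_pow] at h2 ⊢; nlinarith
  have hQeval : ∀ y : ℝ, Q.eval y = (E - η)⁻¹ * (g - P).eval y := by
    intro y; simp [hQ, Polynomial.eval_smul, smul_eq_mul]
  have keyQ : ∀ i : Fin (d + 1), 1 ≤ (-1 : ℝ) ^ ((i : ℕ) + 1) * Q.eval (x i) := by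
    intro i
    have := key i
    rw [hQeval]
    rw [show (-1 : ℝ) ^ ((i : ℕ) + 1) * ((E - η)⁻¹ * (g - P).eval (x i))
        = ((-1 : ℝ) ^ ((i : ℕ) + 1) * (g - P).eval (x i)) / (E - η) by ring]
    rw [le_div_iff₀ hEη]
    linarith
  have part1 : ∀ i : Fin (d + 1), 1 ≤ |Q.eval (x i)| ∧
      0 < (-1 : ℝ) ^ ((i : ℕ) + 1) * Q.eval (x i) := by
    intro i
    have h := keyQ i
    constructor
    · calc (1 : ℝ) ≤ (-1 : ℝ) ^ ((i : ℕ) + 1) * Q.eval (x i) := h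
        _ ≤ |(-1 : ℝ) ^ ((i : ℕ) + 1) * Q.eval (x i)| := le_abs_self _
        _ = |Q.eval (x i)| := by rw [abs_mul, abs_pow, abs_neg, abs_one, one_pow, one_mul]
    · linarith
  -- roots via IVT
  have hcont : ∀ s : Set ℝ, ContinuousOn (fun y => Q.eval y) s :=
    fun s => (Polynomial.continuous Q).continuousOn
  have hroots : ∀ i : Fin d, ∃ y ∈ Set.Ioo (x i.castSucc) (x i.succ), Q.eval y = 0 := by
    intro i
    have hlt : x i.castSucc < x i.succ := hx (Fin.castSucc_lt_succ (i := i))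
    have h1 := (part1 i.castSucc).2
    have h2 := (part1 i.succ).2
    have hc1 : ((i.castSucc : ℕ) : ℕ) = (i : ℕ) := rfl
    have hc2 : ((i.succ : ℕ) : ℕ) = (i : ℕ) + 1 := rfl
    rw [hc1] at h1
    rw [hc2] at h2
    have hpow : (-1 : ℝ) ^ ((i : ℕ) + 1 + 1) = -(-1 : ℝ) ^ ((i : ℕ) + 1) := by
      rw [pow_succ]; ring
    rw [hpow] at h2
    rcases Nat.even_or_odd ((i : ℕ) + 1) with h | h
    · rw [h.neg_one_pow] at h1 h2
      rw [one_mul] at h1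
      have : (0 : ℝ) ∈ Set.Ioo (Q.eval (x i.succ)) (Q.eval (x i.castSucc)) :=
        ⟨by linarith, by linarith⟩
      have := intermediate_value_Ioo' hlt.le (hcont _) this
      obtain ⟨y, hy, hy0⟩ := this
      exact ⟨y, hy, hy0⟩
    · rw [h.neg_one_pow, neg_one_mul, neg_pos] at h1
      rw [h.neg_one_pow] at h2
      have h2' : 0 < Q.eval (x i.succ) := by linarith
      have : (0 : ℝ) ∈ Set.Ioo (Q.eval (x i.castSucc)) (Q.eval (x i.succ)) := ⟨h1, h2'⟩
      have := intermediate_value_Ioo hlt.le (hcont _) this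
      obtain ⟨y, hy, hy0⟩ := this
      exact ⟨y, hy, hy0⟩
  choose r hrmem hr0 using hroots
  have hQne : Q ≠ 0 := by
    have : g - P ≠ 0 := sub_ne_zero.mpr hne
    exact smul_ne_zero (inv_ne_zero hEη.ne') this
  -- degree ≤ d
  have hdle : Q.natDegree ≤ d := by
    calc Q.natDegree ≤ (g - P).natDegree := Polynomial.natDegree_smul_le _ _
      _ ≤ max g.natDegree P.natDegree := Polynomial.natDegree_sub_le _ _
      _ ≤ d := max_le hg (le_trans hP (Nat.sub_le d 1))
  -- r is strictly monotone, hence injective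
  have hrmono : StrictMono r := by
    intro i j hij
    have h1 : r i < x i.succ := (hrmem i).2
    have h2 : x j.castSucc < r j := (hrmem j).1
    have h3 : x i.succ ≤ x j.castSucc := by
      apply hx.monotone
      have : (i.succ : ℕ) ≤ (j.castSucc : ℕ) := by
        simp [Fin.val_succ, Fin.coe_castSucc]
        exact hij
      exact this
    linarith
  have hdge : d ≤ Q.natDegree := by
    have hinj : Function.Injective r := hrmono.injective
    have hsub' : Finset.image r Finset.univ ⊆ Q.roots.toFinset := by
      intro y hy
      simp only [Finset.mem_image, Finset.mem_univ, true_and] at hy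
      obtain ⟨i, rfl⟩ := hy
      rw [Multiset.mem_toFinset, Polynomial.mem_roots hQne]
      exact hr0 i
    calc d = (Finset.univ : Finset (Fin d)).card := by simp
      _ = (Finset.image r Finset.univ).card := (Finset.card_image_of_injective _ hinj).symm
      _ ≤ Q.roots.toFinset.card := Finset.card_le_card hsub'
      _ ≤ Multiset.card Q.roots := Q.roots.toFinset_card_le
      _ ≤ Q.natDegree := Polynomial.card_roots' Q
  exact ⟨part1, le_antisymm hdle hdge, r, hrmem, hr0⟩
end

section
/- Let Δ be a real polynomial of degree d admitting d+1 points x₁ < ... < x_{d+1} in [−1,1] at which Δ alternates sign with |Δ(xᵢ)| ≥ 1. If A is a Hermitian matrix whose characteristic polynomial equals c·(Δ(x) − cos θ) for some c ≠ 0 and θ ∈ ℝ, then every eigenvalue of A lies in [x₁, x_{d+1}] ⊆ [−1,1]; in particular ‖A‖ ≤ 1 (operator norm). -/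
open Polynomial

private lemma two_le_card_multiset {α : Type*} {s : Multiset α} {a b : α}
    (ha : a ∈ s) (hb : b ∈ s) (hab : a ≠ b) : 2 ≤ Multiset.card s := by
  obtain ⟨t, rfl⟩ := Multiset.exists_cons_of_mem ha
  have hbt : b ∈ t := by
    rcases Multiset.mem_cons.mp hb with h | h
    · exact absurd h.symm hab
    · exact h
  obtain ⟨u, rfl⟩ := Multiset.exists_cons_of_mem hbt
  simp

private lemma card_filter_add {α : Type*} (s : Multiset α) (p1 p2 q : α → Prop)
    [DecidablePred p1] [DecidablePred p2] [DecidablePred q]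
    (h1 : ∀ x, p1 x → q x) (h2 : ∀ x, p2 x → q x) (hd : ∀ x, p1 x → p2 x → False) :
    Multiset.card (s.filter p1) + Multiset.card (s.filter p2)
      ≤ Multiset.card (s.filter q) := by
  classical
  rw [← Multiset.card_add]
  apply Multiset.card_le_card
  rw [Multiset.le_iff_count]
  intro a
  rw [Multiset.count_add, Multiset.count_filter, Multiset.count_filter, Multiset.count_filter]
  by_cases hp1 : p1 a <;> by_cases hp2 : p2 a
  · exact absurd (hd a hp1 hp2) (fun h => h)
  · simp [hp1, hp2, h1 a hp1]
  · simp [hp1, hp2, h2 a hp2]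
  · simp [hp1, hp2]

private lemma card_filter_mono {α : Type*} (s : Multiset α) {p q : α → Prop}
    [DecidablePred p] [DecidablePred q] (h : ∀ x, p x → q x) :
    Multiset.card (s.filter p) ≤ Multiset.card (s.filter q) :=
  Multiset.card_le_card (Multiset.monotone_filter_right s h)

private lemma one_le_card_filter {α : Type*} (s : Multiset α) (p : α → Prop)
    [DecidablePred p] {a : α} (ha : a ∈ s) (hpa : p a) :
    1 ≤ Multiset.card (s.filter p) :=
  Multiset.card_pos_iff_exists_mem.mpr ⟨a, Multiset.mem_filter.mpr ⟨ha, hpa⟩⟩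

private lemma exists_root_Ioo (P : Polynomial ℝ) {a b : ℝ} (hab : a < b)
    (h : P.eval a * P.eval b < 0) : ∃ r, (a < r ∧ r < b) ∧ P.eval r = 0 := by
  have hc : ContinuousOn (fun x => P.eval x) (Set.Icc a b) := P.continuous.continuousOn
  rcases mul_neg_iff.mp h with ⟨h1, h2⟩ | ⟨h1, h2⟩
  · obtain ⟨r, hr, hr0⟩ := intermediate_value_Ioo' hab.le hc (Set.mem_Ioo.mpr ⟨h2, h1⟩)
    exact ⟨r, ⟨hr.1, hr.2⟩, hr0⟩
  · obtain ⟨r, hr, hr0⟩ := intermediate_value_Ioo hab.le hc (Set.mem_Ioo.mpr ⟨h1, h2⟩)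
    exact ⟨r, ⟨hr.1, hr.2⟩, hr0⟩

/-- Key counting lemma: if `P` has weakly alternating signs (pattern `ε·(-1)^k`, possibly zero,
with no two consecutive zeros) at strictly increasing points `y 0, …, y n`, then `P` has at
least `n` roots (with multiplicity) in `[y 0, y n]`, and even in `[y 0, y n)` when
`P (y n) ≠ 0`. -/
private lemma key_count (y : ℕ → ℝ) (hy : StrictMono y) (ε : ℝ) (hε : ε = 1 ∨ ε = -1)
    (P : Polynomial ℝ) (hP : P ≠ 0) :
    ∀ n : ℕ, (∀ k ≤ n, 0 ≤ ε * (-1) ^ k * P.eval (y k)) →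
      (∀ k < n, ¬(P.eval (y k) = 0 ∧ P.eval (y (k + 1)) = 0)) →
      ((n : ℕ) ≤ Multiset.card (P.roots.filter (fun r => y 0 ≤ r ∧ r ≤ y n)) ∧
        (P.eval (y n) ≠ 0 →
          n ≤ Multiset.card (P.roots.filter (fun r => y 0 ≤ r ∧ r < y n)))) := by
  intro n
  induction n using Nat.strong_induction_on with
  | _ n IH =>
    intro hsign hnz
    have hε' : ε ≠ 0 := by rcases hε with h | h <;> rw [h] <;> norm_num
    have hsign' : ∀ k ≤ n, P.eval (y k) ≠ 0 → 0 < ε * (-1) ^ k * P.eval (y k) := by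
      intro k hk h0
      exact lt_of_le_of_ne (hsign k hk)
        (Ne.symm (mul_ne_zero (mul_ne_zero hε' (pow_ne_zero _ (by norm_num))) h0))
    have hu : ∀ k : ℕ, ε * (-1 : ℝ) ^ k = 1 ∨ ε * (-1 : ℝ) ^ k = -1 := by
      intro k
      rcases hε with h | h <;> rcases neg_one_pow_eq_or ℝ k with h2 | h2 <;>
        rw [h, h2] <;> norm_num
    match n, hsign, hnz, hsign', IH with
    | 0, _, _, _, _ => exact ⟨by simp, fun _ => by simp⟩
    | Nat.succ m, hsign, hnz, hsign', IH =>
      have hsm : ∀ k ≤ m, 0 ≤ ε * (-1) ^ k * P.eval (y k) :=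
        fun k hk => hsign k (le_trans hk (Nat.le_succ m))
      have hnm : ∀ k < m, ¬(P.eval (y k) = 0 ∧ P.eval (y (k + 1)) = 0) :=
        fun k hk => hnz k (lt_trans hk (Nat.lt_succ_self m))
      by_cases hSn : P.eval (y (m + 1)) = 0
      · -- the last point is itself a root; previous point isn't
        have hPm : P.eval (y m) ≠ 0 := fun h => hnz m (Nat.lt_succ_self m) ⟨h, hSn⟩
        have h2 := (IH m (Nat.lt_succ_self m) hsm hnm).2 hPm
        have hylast : y (m + 1) ∈ P.roots := mem_roots'.mpr ⟨hP, hSn⟩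
        have hcard2 : 1 ≤ Multiset.card (P.roots.filter (fun r => r = y (m + 1))) :=
          one_le_card_filter _ _ hylast rfl
        have hsum := card_filter_add P.roots
          (fun r => y 0 ≤ r ∧ r < y m) (fun r => r = y (m + 1))
          (fun r => y 0 ≤ r ∧ r ≤ y (m + 1))
          (fun r hr => ⟨hr.1, le_of_lt (lt_trans hr.2 (hy (Nat.lt_succ_self m)))⟩)
          (fun r hr => ⟨hr ▸ hy.monotone (Nat.zero_le _), hr ▸ le_refl _⟩)
          (fun r hr1 hr2 => by
            rw [hr2] at hr1
            exact absurd hr1.2 (not_lt.mpr (hy.monotone (Nat.le_succ m))))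
        constructor
        · show (m + 1 : ℕ) ≤ Multiset.card (P.roots.filter (fun r => y 0 ≤ r ∧ r ≤ y (m + 1)))
          omega
        · intro h; exact absurd hSn h
      · -- last value nonzero
        have hs1 : 0 < ε * (-1) ^ (m + 1) * P.eval (y (m + 1)) :=
          hsign' (m + 1) (le_refl _) hSn
        by_cases hPm : P.eval (y m) = 0
        · -- degenerate: interior zero at y m
          match m, hsm, hnm, hPm, hsign, hnz, hsign' with
          | 0, _, _, hPm, _, _, _ =>
            -- P (y 0) = 0 : the root y 0 is in [y 0, y 1)
            have hy0 : y 0 ∈ P.roots := mem_roots'.mpr ⟨hP, hPm⟩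
            have h1 : 1 ≤ Multiset.card (P.roots.filter (fun r => y 0 ≤ r ∧ r < y 1)) :=
              one_le_card_filter _ _ hy0 ⟨le_refl _, hy (Nat.lt_succ_self 0)⟩
            refine ⟨?_, fun _ => h1⟩
            calc (1 : ℕ) ≤ _ := h1
              _ ≤ _ := card_filter_mono _ (fun r hr => ⟨hr.1, hr.2.le⟩)
          | Nat.succ l, hsm, hnm, hPm, hsign, hnz, hsign' =>
            -- points y l (nonzero), y (l+1) (zero), y (l+2) (nonzero)
            have hPl : P.eval (y l) ≠ 0 := fun h => hnm l (Nat.lt_succ_self l) ⟨h, hPm⟩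
            have hsl : ∀ k ≤ l, 0 ≤ ε * (-1) ^ k * P.eval (y k) :=
              fun k hk => hsm k (le_trans hk (Nat.le_succ l))
            have hnl : ∀ k < l, ¬(P.eval (y k) = 0 ∧ P.eval (y (k + 1)) = 0) :=
              fun k hk => hnm k (lt_trans hk (Nat.lt_succ_self l))
            have hIHl := (IH l (by omega) hsl hnl).2 hPl
            -- the two outer values have the same sign
            have hsA : 0 < ε * (-1) ^ l * P.eval (y l) := hsign' l (by omega) hPl
            have hpow : ((-1 : ℝ)) ^ (l + 2) = (-1) ^ l := by
              rw [pow_add]; norm_num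
            have hsC : 0 < ε * (-1) ^ l * P.eval (y (l + 2)) := by
              have := hs1; rw [hpow] at this; exact this
            have hac : 0 < P.eval (y l) * P.eval (y (l + 2)) := by
              rcases hu l with h | h <;> rw [h] at hsA hsC <;> nlinarith
            -- at least two roots (with multiplicity) in (y l, y (l+2))
            have hclaim : 2 ≤ Multiset.card
                (P.roots.filter (fun r => y l < r ∧ r < y (l + 2))) := by
              classical
              have hb1 : y l < y (l + 1) := hy (Nat.lt_succ_self l)
              have hb2 : y (l + 1) < y (l + 2) := hy (Nat.lt_succ_self (l + 1))
              by_cases hm2 : 2 ≤ P.rootMultiplicity (y (l + 1))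
              · have hcount : Multiset.count (y (l + 1))
                    (P.roots.filter (fun r => y l < r ∧ r < y (l + 2)))
                    = Multiset.count (y (l + 1)) P.roots := by
                  rw [Multiset.count_filter, if_pos ⟨hb1, hb2⟩]
                calc 2 ≤ P.rootMultiplicity (y (l + 1)) := hm2
                  _ = Multiset.count (y (l + 1)) P.roots := (P.count_roots).symm
                  _ = _ := hcount.symm
                  _ ≤ _ := Multiset.count_le_card _ _
              · obtain ⟨R, hR⟩ := dvd_iff_isRoot.mpr (show P.IsRoot (y (l + 1)) from hPm)
                have hRb : R.eval (y (l + 1)) ≠ 0 := by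
                  intro h0
                  apply hm2
                  rw [le_rootMultiplicity_iff hP]
                  obtain ⟨S, hS⟩ := dvd_iff_isRoot.mpr (show R.IsRoot (y (l + 1)) from h0)
                  exact ⟨S, by rw [hR, hS]; ring⟩
                by_cases hroot : ∃ r, (y l < r ∧ r < y (l + 2)) ∧ R.eval r = 0
                · obtain ⟨r, hrmem, hr0⟩ := hroot
                  have hrP : r ∈ P.roots := by
                    rw [mem_roots']
                    exact ⟨hP, by rw [hR]; simp [IsRoot, hr0]⟩
                  have hbP : y (l + 1) ∈ P.roots := mem_roots'.mpr ⟨hP, hPm⟩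
                  have hrb : r ≠ y (l + 1) := fun h => hRb (h ▸ hr0)
                  exact two_le_card_multiset
                    (Multiset.mem_filter.mpr ⟨hrP, hrmem⟩)
                    (Multiset.mem_filter.mpr ⟨hbP, ⟨hb1, hb2⟩⟩) hrb
                · exfalso
                  push_neg at hroot
                  have hRa : R.eval (y l) ≠ 0 := by
                    intro h0
                    apply hPl
                    rw [hR]; simp [h0]
                  have hRc : R.eval (y (l + 2)) ≠ 0 := by
                    intro h0
                    apply hSn
                    rw [hR]; simp [h0]
                  have hnot : ¬(R.eval (y l) * R.eval (y (l + 2)) < 0) := by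
                    intro hneg
                    obtain ⟨r, hrmem, hr0⟩ :=
                      exists_root_Ioo R (lt_trans hb1 hb2) hneg
                    exact hroot r hrmem hr0
                  have hRpos : 0 < R.eval (y l) * R.eval (y (l + 2)) :=
                    lt_of_le_of_ne (not_lt.mp hnot) (Ne.symm (mul_ne_zero hRa hRc))
                  have heq : P.eval (y l) * P.eval (y (l + 2))
                      = ((y l - y (l + 1)) * (y (l + 2) - y (l + 1)))
                        * (R.eval (y l) * R.eval (y (l + 2))) := by
                    rw [hR]; simp; ring
                  have hd1 : y l - y (l + 1) < 0 := by linarith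
                  have hd2 : 0 < y (l + 2) - y (l + 1) := by linarith
                  nlinarith [mul_pos (mul_pos (neg_pos.mpr hd1) hd2) hRpos]
            -- combine
            have hsum := card_filter_add P.roots
              (fun r => y 0 ≤ r ∧ r < y l) (fun r => y l < r ∧ r < y (l + 2))
              (fun r => y 0 ≤ r ∧ r < y (l + 2))
              (fun r hr => ⟨hr.1, lt_trans hr.2 (hy.monotone (by omega) |>.trans_lt
                (hy (Nat.lt_succ_self (l + 1))))⟩)
              (fun r hr => ⟨le_trans (hy.monotone (Nat.zero_le l)) hr.1.le, hr.2⟩)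
              (fun r hr1 hr2 => absurd hr2.1 (not_lt.mpr hr1.2.le))
            have hfin : (l + 2 : ℕ) ≤ Multiset.card
                (P.roots.filter (fun r => y 0 ≤ r ∧ r < y (l + 2))) := by omega
            exact ⟨le_trans hfin (card_filter_mono _ (fun r hr => ⟨hr.1, hr.2.le⟩)),
              fun _ => hfin⟩
        · -- both nonzero: sign change gives a root in the open last interval
          have hs0 : 0 < ε * (-1) ^ m * P.eval (y m) := hsign' m (Nat.le_succ m) hPm
          have hprod : P.eval (y m) * P.eval (y (m + 1)) < 0 := by
            have hpow : ((-1 : ℝ)) ^ (m + 1) = -((-1) ^ m) := by rw [pow_succ]; ring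
            rw [hpow] at hs1
            have hs1' : 0 < -(ε * (-1) ^ m) * P.eval (y (m + 1)) := by
              nlinarith [hs1]
            rcases hu m with h | h <;> rw [h] at hs0 hs1' <;> nlinarith
          obtain ⟨r, hrmem, hr0⟩ := exists_root_Ioo P (hy (Nat.lt_succ_self m)) hprod
          have h2 := (IH m (Nat.lt_succ_self m) hsm hnm).2 hPm
          have hrroots : r ∈ P.roots := mem_roots'.mpr ⟨hP, hr0⟩
          have hr1 : 1 ≤ Multiset.card
              (P.roots.filter (fun s => y m < s ∧ s < y (m + 1))) :=
            one_le_card_filter _ _ hrroots hrmem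
          have hsum := card_filter_add P.roots
            (fun r => y 0 ≤ r ∧ r < y m) (fun s => y m < s ∧ s < y (m + 1))
            (fun r => y 0 ≤ r ∧ r < y (m + 1))
            (fun r hr => ⟨hr.1, lt_trans hr.2 (hy (Nat.lt_succ_self m))⟩)
            (fun r hr => ⟨le_trans (hy.monotone (Nat.zero_le m)) hr.1.le, hr.2⟩)
            (fun r h1 h2' => absurd h2'.1 (not_lt.mpr h1.2.le))
          have hfin : (m + 1 : ℕ) ≤ Multiset.card
              (P.roots.filter (fun r => y 0 ≤ r ∧ r < y (m + 1))) := by omega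
          exact ⟨le_trans hfin (card_filter_mono _ (fun r hr => ⟨hr.1, hr.2.le⟩)),
            fun _ => hfin⟩

set_option maxHeartbeats 1000000 in
/-- If a Hermitian matrix `A` has characteristic polynomial `c (Δ(x) − cos θ)`
where `Δ` alternates with magnitude `≥ 1` at `d+1` points of `[−1,1]`, then all
eigenvalues of `A` lie in `[x₁, x_{d+1}] ⊆ [−1,1]`; in particular all
eigenvalues have absolute value at most `1`. -/
theorem eigenvalues_in_interval_of_discriminant_charpoly
    (d : ℕ) (hd : 1 ≤ d) (Δ : Polynomial ℝ) (hdeg : Δ.natDegree = d)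
    (x : Fin (d + 1) → ℝ) (hx : StrictMono x)
    (hxmem : ∀ i, x i ∈ Set.Icc (-1 : ℝ) 1)
    (halt : ∀ i : Fin d, Δ.eval (x i.castSucc) * Δ.eval (x i.succ) < 0)
    (hbig : ∀ i, 1 ≤ |Δ.eval (x i)|)
    (A : Matrix (Fin d) (Fin d) ℂ) (hA : A.IsHermitian)
    (c : ℂ) (hc : c ≠ 0) (θ : ℝ)
    (hchar : ∀ z : ℂ, A.charpoly.eval z
      = c * ((Δ.map (algebraMap ℝ ℂ)).eval z - (Real.cos θ : ℂ))) :
    (∀ i, hA.eigenvalues i ∈ Set.Icc (x 0) (x (Fin.last d))) ∧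
      ∀ i, |hA.eigenvalues i| ≤ 1 := by
  classical
  set P : Polynomial ℝ := Δ - Polynomial.C (Real.cos θ) with hPdef
  have hPdeg : P.natDegree = d := by rw [hPdef, natDegree_sub_C, hdeg]
  have hP0 : P ≠ 0 := fun h => by simp [h] at hPdeg; omega
  -- the auxiliary increasing sequence extending x
  set y : ℕ → ℝ := fun k => if h : k ≤ d then x ⟨k, by omega⟩ else x (Fin.last d) + (k - d : ℕ)
    with hydef
  have hyx : ∀ k (h : k ≤ d), y k = x ⟨k, by omega⟩ := by
    intro k h; simp only [hydef, dif_pos h]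
  have hy : StrictMono y := by
    intro i j hij
    by_cases hi : i ≤ d <;> by_cases hj : j ≤ d
    · rw [hyx i hi, hyx j hj]
      exact hx (by simpa [Fin.lt_def] using hij)
    · rw [hyx i hi]
      simp only [hydef, dif_neg hj]
      have h1 : x ⟨i, by omega⟩ ≤ x (Fin.last d) := hx.monotone (by simp [Fin.le_def]; omega)
      have h2 : (1 : ℝ) ≤ (j - d : ℕ) := by
        have : 1 ≤ j - d := by omega
        exact_mod_cast this
      linarith
    · omega
    · simp only [hydef, dif_neg hi, dif_neg hj]
      have hc : ((i - d : ℕ) : ℝ) < ((j - d : ℕ) : ℝ) :=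
        Nat.cast_lt.mpr (by omega)
      linarith
  -- alternation of Δ along y
  have halty : ∀ k, k < d → Δ.eval (y k) * Δ.eval (y (k + 1)) < 0 := by
    intro k hk
    have h1 : y k = x ((⟨k, hk⟩ : Fin d).castSucc) := hyx k (by omega)
    have h2 : y (k + 1) = x ((⟨k, hk⟩ : Fin d).succ) := hyx (k + 1) (by omega)
    rw [h1, h2]
    exact halt _
  have hbigy : ∀ k, k ≤ d → 1 ≤ |Δ.eval (y k)| := by
    intro k hk; rw [hyx k hk]; exact hbig _
  -- the sign ε
  set ε : ℝ := if 0 < Δ.eval (y 0) then 1 else -1 with hεdef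
  have hε : ε = 1 ∨ ε = -1 := by
    by_cases h : 0 < Δ.eval (y 0) <;> simp [hεdef, h]
  -- strict alternating signs for Δ
  have hsignΔ : ∀ k ≤ d, 0 < ε * (-1) ^ k * Δ.eval (y k) := by
    intro k
    induction k with
    | zero =>
      intro _
      have h0 : Δ.eval (y 0) ≠ 0 := by
        intro h
        have := halty 0 (by omega)
        rw [h] at this; simp at this
      by_cases h : 0 < Δ.eval (y 0)
      · have hεe : ε = 1 := by simp [hεdef, h]
        rw [hεe]; simpa using h
      · have hεe : ε = -1 := by simp [hεdef, h]
        have hlt : Δ.eval (y 0) < 0 := (not_lt.mp h).lt_of_ne h0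
        rw [hεe]
        simp only [pow_zero, mul_one, neg_one_mul]
        linarith
    | succ k IHk =>
      intro hk
      have hprev := IHk (by omega)
      have halt' := halty k (by omega)
      have hpow : ((-1 : ℝ)) ^ (k + 1) = -((-1) ^ k) := by rw [pow_succ]; ring
      rw [hpow]
      have hu : ε * (-1 : ℝ) ^ k = 1 ∨ ε * (-1 : ℝ) ^ k = -1 := by
        rcases hε with h | h <;> rcases neg_one_pow_eq_or ℝ k with h2 | h2 <;>
          rw [h, h2] <;> norm_num
      have hgoal : ε * -((-1 : ℝ) ^ k) * Δ.eval (y (k + 1))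
          = -(ε * (-1) ^ k) * Δ.eval (y (k + 1)) := by ring
      rw [hgoal]
      rcases hu with h | h <;> rw [h] at hprev ⊢ <;> nlinarith [hprev, halt']
  -- weak alternating signs for P
  have hcos := abs_le.mp (Real.abs_cos_le_one θ)
  have hsignP : ∀ k ≤ d, 0 ≤ ε * (-1) ^ k * P.eval (y k) := by
    intro k hk
    have h1 := hsignΔ k hk
    have h2 := hbigy k hk
    have hu : ε * (-1 : ℝ) ^ k = 1 ∨ ε * (-1 : ℝ) ^ k = -1 := by
      rcases hε with h | h <;> rcases neg_one_pow_eq_or ℝ k with h2' | h2' <;>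
        rw [h, h2'] <;> norm_num
    have hPeval : P.eval (y k) = Δ.eval (y k) - Real.cos θ := by
      simp [hPdef]
    rw [hPeval]
    rcases hu with h | h <;> rw [h] at h1 ⊢
    · rw [abs_of_pos (by linarith : (0:ℝ) < Δ.eval (y k))] at h2
      nlinarith
    · rw [abs_of_neg (by nlinarith : Δ.eval (y k) < 0)] at h2
      nlinarith
  have hnzP : ∀ k < d, ¬(P.eval (y k) = 0 ∧ P.eval (y (k + 1)) = 0) := by
    rintro k hk ⟨h1, h2⟩
    have hPe : ∀ j, P.eval (y j) = Δ.eval (y j) - Real.cos θ := by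
      intro j; simp [hPdef]
    rw [hPe] at h1 h2
    have := halty k hk
    have e1 : Δ.eval (y k) = Real.cos θ := by linarith
    have e2 : Δ.eval (y (k + 1)) = Real.cos θ := by linarith
    rw [e1, e2] at this
    nlinarith
  -- the counting lemma
  have hcount := key_count y hy ε hε P hP0 d hsignP hnzP
  have hyd : y d = x (Fin.last d) := by
    rw [hyx d (le_refl d)]; rfl
  have hy0 : y 0 = x 0 := by
    rw [hyx 0 (by omega)]; rfl
  -- every real root of P lies in [x 0, x last]
  have hloc : ∀ μ : ℝ, P.eval μ = 0 → x 0 ≤ μ ∧ μ ≤ x (Fin.last d) := by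
    intro μ hμ
    by_contra hcon
    have hμroots : μ ∈ P.roots := mem_roots'.mpr ⟨hP0, hμ⟩
    have hμ1 : 1 ≤ Multiset.card (P.roots.filter (fun r => r = μ)) :=
      one_le_card_filter _ _ hμroots rfl
    have hsum := card_filter_add P.roots
      (fun r => y 0 ≤ r ∧ r ≤ y d) (fun r => r = μ) (fun _ => True)
      (fun _ _ => trivial) (fun _ _ => trivial)
      (fun r hr hrμ => by
        rw [hy0, hyd] at hr
        exact hcon (hrμ ▸ hr))
    have hall : Multiset.card (P.roots.filter (fun _ => True)) ≤ d := by
      calc Multiset.card (P.roots.filter (fun _ => True))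
          ≤ Multiset.card P.roots := Multiset.card_le_card (Multiset.filter_le _ _)
        _ ≤ P.natDegree := P.card_roots'
        _ = d := hPdeg
    omega
  -- each eigenvalue is a real root of P
  have hroot : ∀ i, P.eval (hA.eigenvalues i) = 0 := by
    intro i
    set μ := hA.eigenvalues i with hμdef
    have hspec := hA.eigenvalues_mem_spectrum_real i
    rw [spectrum.mem_iff] at hspec
    -- the matrix algebraMap ℝ _ μ - A equals scalar (μ : ℂ) - A
    have hmat : (algebraMap ℝ (Matrix (Fin d) (Fin d) ℂ)) μ - A
        = (Matrix.scalar (Fin d)) ((μ : ℝ) : ℂ) - A := by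
      congr 1
    rw [hmat] at hspec
    have hdet : ((Matrix.scalar (Fin d)) ((μ : ℝ) : ℂ) - A).det = 0 := by
      by_contra hne
      exact hspec ((Matrix.isUnit_iff_isUnit_det _).mpr (isUnit_iff_ne_zero.mpr hne))
    have hevalc : A.charpoly.eval ((μ : ℝ) : ℂ) = 0 := by
      rw [Matrix.charpoly, _root_.eval_det, Matrix.matPolyEquiv_charmatrix]
      simpa using hdet
    have := hchar ((μ : ℝ) : ℂ)
    rw [hevalc] at this
    have hfac : (Δ.map (algebraMap ℝ ℂ)).eval ((μ : ℝ) : ℂ) - (Real.cos θ : ℂ) = 0 := by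
      rcases mul_eq_zero.mp this.symm with h | h
      · exact absurd h hc
      · exact h
    have hmap : (Δ.map (algebraMap ℝ ℂ)).eval ((μ : ℝ) : ℂ)
        = ((Δ.eval μ : ℝ) : ℂ) := by
      rw [eval_map, show ((μ : ℝ) : ℂ) = algebraMap ℝ ℂ μ from rfl, eval₂_at_apply]
      rfl
    rw [hmap] at hfac
    have : ((Δ.eval μ : ℝ) : ℂ) = ((Real.cos θ : ℝ) : ℂ) := by
      rwa [sub_eq_zero] at hfac
    have hΔμ : Δ.eval μ = Real.cos θ := by exact_mod_cast this
    simp [hPdef, hΔμ]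
  have hmain : ∀ i, hA.eigenvalues i ∈ Set.Icc (x 0) (x (Fin.last d)) := by
    intro i
    obtain ⟨h1, h2⟩ := hloc _ (hroot i)
    exact ⟨h1, h2⟩
  refine ⟨hmain, fun i => ?_⟩
  obtain ⟨h1, h2⟩ := hmain i
  have hx0 := (hxmem 0).1
  have hxl := (hxmem (Fin.last d)).2
  rw [abs_le]
  constructor <;> linarith
end

section
/- Let A_θ be the m×m periodic Jacobi matrix with parameters a_t ∈ ℝ, b_t > 0 and phase θ, and let P be a polynomial of degree strictly less than m. Then tr[P(A_θ)] is independent of θ; in particular tr[P(A_θ)] = tr[P(A_0)] for all θ. -/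
open Polynomial Matrix Complex



noncomputable def Umat (m : ℕ) (a b : Fin m → ℝ) (z : ℂ) : Matrix (Fin m) (Fin m) ℂ :=
  Matrix.of fun i j =>
    if (i : ℕ) = (j : ℕ) then (a i : ℂ)
    else if (j : ℕ) = ((i : ℕ) + 1) % m then (b i : ℂ) * z
    else if (i : ℕ) = ((j : ℕ) + 1) % m then (b j : ℂ) * z⁻¹
    else 0

noncomputable def Mmat (m : ℕ) (a b : Fin m → ℝ) : Matrix (Fin m) (Fin m) (Polynomial ℂ) :=
  Matrix.of fun i j =>
    if (i : ℕ) = (j : ℕ) then Polynomial.C (a i : ℂ) * Polynomial.X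
    else if (j : ℕ) = ((i : ℕ) + 1) % m then Polynomial.C (b i : ℂ) * Polynomial.X ^ 2
    else if (i : ℕ) = ((j : ℕ) + 1) % m then Polynomial.C (b j : ℂ)
    else 0

lemma trace_pow_eq_of_conj {n : Type*} [Fintype n] [DecidableEq n]
    (D E A B : Matrix n n ℂ) (hDE : D * E = 1) (hED : E * D = 1)
    (h : D * A = B * D) (k : ℕ) : (A ^ k).trace = (B ^ k).trace := by
  have hA : A = E * B * D := by
    calc A = (E * D) * A := by rw [hED, one_mul]
    _ = E * (D * A) := by rw [mul_assoc]
    _ = E * (B * D) := by rw [h]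
    _ = E * B * D := by rw [mul_assoc]
  have hpow : ∀ k : ℕ, A ^ k = E * B ^ k * D := by
    intro k
    induction k with
    | zero => simpa using hED.symm
    | succ k ih =>
        rw [pow_succ, ih, hA, pow_succ]
        calc E * B ^ k * D * (E * B * D) = E * B ^ k * (D * E) * (B * D) := by
              simp only [mul_assoc]
        _ = E * (B ^ k * B) * D := by rw [hDE]; simp only [mul_one, mul_assoc]
  rw [hpow k, Matrix.trace_mul_comm (E * B ^ k) D, ← mul_assoc, hDE, one_mul]

lemma gaugeLem (m : ℕ) (hm : 3 ≤ m) (a b : Fin m → ℝ) (θ : ℝ) :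
    Matrix.diagonal (fun t : Fin m => Complex.exp (Complex.I * θ * t / m)) * periodicJacobi m a b θ
      = Umat m a b (Complex.exp (-(Complex.I * θ / m))) *
        Matrix.diagonal (fun t : Fin m => Complex.exp (Complex.I * θ * t / m)) := by
  have hm0 : (m : ℂ) ≠ 0 := Nat.cast_ne_zero.mpr (by omega)
  ext i j
  rw [Matrix.diagonal_mul, Matrix.mul_diagonal]
  have hi : (i : ℕ) < m := i.isLt
  have hj : (j : ℕ) < m := j.isLt
  set E := Complex.exp (Complex.I * θ / m) with hE0
  have hEne : E ≠ 0 := Complex.exp_ne_zero _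
  have hE : ∀ t : Fin m, Complex.exp (Complex.I * θ * t / m) = E ^ (t : ℕ) := by
    intro t
    rw [hE0, ← Complex.exp_nat_mul]
    congr 1
    field_simp
  have hz : Complex.exp (-(Complex.I * θ / m)) = E⁻¹ := by
    rw [Complex.exp_neg]
  have hful : Complex.exp (Complex.I * θ) = E ^ m := by
    rw [hE0, ← Complex.exp_nat_mul]
    congr 1
    field_simp
  have hfulneg : Complex.exp (-(Complex.I * θ)) = (E ^ m)⁻¹ := by
    rw [Complex.exp_neg, hful]
  simp only [periodicJacobi, Umat, Matrix.of_apply, hE, hz, hful, hfulneg, inv_inv]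
  have hi1 : ((i:ℕ) + 1) % m = if (i:ℕ) + 1 = m then 0 else (i:ℕ)+1 := by
    split_ifs with h
    · simp [h]
    · exact Nat.mod_eq_of_lt (by omega)
  have hj1 : ((j:ℕ) + 1) % m = if (j:ℕ) + 1 = m then 0 else (j:ℕ)+1 := by
    split_ifs with h
    · simp [h]
    · exact Nat.mod_eq_of_lt (by omega)
  have hm' : m - 1 + 1 = m := by omega
  simp only [hi1, hj1]
  split_ifs <;> try (exfalso; omega)
  all_goals first
    | rw [mul_zero, zero_mul]
    | (have h : (j:ℕ) = (i:ℕ) := by omega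
       rw [h, mul_comm])
    | (have h : (j:ℕ) = (i:ℕ)+1 := by omega
       rw [h, pow_succ]
       field_simp)
    | (have h : (i:ℕ) = (j:ℕ)+1 := by omega
       rw [h, pow_succ]
       ring)
    | (have h1 : (i:ℕ) = 0 := by omega
       have h2 : (j:ℕ) = m - 1 := by omega
       have hb : b ⟨m - 1, Nat.sub_lt i.pos one_pos⟩ = b j := by
         congr 1
         exact Fin.ext (by simp [h2])
       rw [h1, h2, hb, ← hm', pow_succ]
       field_simp
       rw [Nat.add_sub_cancel])
    | (have h1 : (j:ℕ) = 0 := by omega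
       have h2 : (i:ℕ) = m - 1 := by omega
       have hb : b ⟨m - 1, Nat.sub_lt i.pos one_pos⟩ = b i := by
         congr 1
         exact Fin.ext (by simp [h2])
       rw [h1, h2, hb, ← hm', pow_succ]
       field_simp
       rw [Nat.add_sub_cancel, mul_comm])
noncomputable def zetam (m : ℕ) : ℂ := Complex.exp (2 * Real.pi * Complex.I / m)

lemma zetam_ne_zero (m : ℕ) : zetam m ≠ 0 := Complex.exp_ne_zero _

lemma zetam_pow_m (m : ℕ) (hm : 3 ≤ m) : zetam m ^ m = 1 := by
  have hm0 : (m : ℂ) ≠ 0 := Nat.cast_ne_zero.mpr (by omega)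
  rw [zetam, ← Complex.exp_nat_mul,
    show (m : ℂ) * (2 * Real.pi * Complex.I / m) = 2 * Real.pi * Complex.I by field_simp,
    Complex.exp_two_pi_mul_I]

lemma zetam_pow_dvd (m : ℕ) (hm : 3 ≤ m) (d : ℕ) (h : zetam m ^ d = 1) : (m : ℤ) ∣ (d : ℤ) := by
  have hm0 : (m : ℂ) ≠ 0 := Nat.cast_ne_zero.mpr (by omega)
  have hπ : (Real.pi : ℂ) ≠ 0 := by exact_mod_cast Real.pi_ne_zero
  rw [zetam, ← Complex.exp_nat_mul, Complex.exp_eq_one_iff] at h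
  obtain ⟨n, hn⟩ := h
  have h2 : (d : ℂ) = n * m := by
    field_simp at hn
    have hI : (Complex.I : ℂ) ≠ 0 := Complex.I_ne_zero
    have h2π : (2 * (Real.pi:ℂ) * Complex.I) ≠ 0 := by
      simp [hπ, hI]
    apply mul_right_cancel₀ h2π
    rw [hn]
    ring
  have h3 : (d : ℤ) = n * m := by exact_mod_cast h2
  exact ⟨n, by linarith [h3]⟩

lemma diag_mul_diag_one {m : ℕ} (d e : Fin m → ℂ) (h : ∀ t, d t * e t = 1) :
    Matrix.diagonal d * Matrix.diagonal e = 1 := by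
  rw [Matrix.diagonal_mul_diagonal]
  have : (fun i => d i * e i) = fun _ => (1:ℂ) := funext h
  rw [this, ← Matrix.diagonal_one]

lemma Zconj (m : ℕ) (hm : 3 ≤ m) (a b : Fin m → ℝ) (z : ℂ) (hz : z ≠ 0) :
    Matrix.diagonal (fun t : Fin m => zetam m ^ (t : ℕ)) * Umat m a b z
      = Umat m a b ((zetam m)⁻¹ * z) *
          Matrix.diagonal (fun t : Fin m => zetam m ^ (t : ℕ)) := by
  have hζ := zetam_ne_zero m
  ext i j
  rw [Matrix.diagonal_mul, Matrix.mul_diagonal]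
  simp only [Umat, Matrix.of_apply, _root_.mul_inv_rev, inv_inv]
  split_ifs with h1 h2 h3
  · rw [h1, mul_comm]
  · rw [h2, ← pow_eq_pow_mod ((i : ℕ) + 1) (zetam_pow_m m hm), pow_succ]
    field_simp
  · rw [h3, ← pow_eq_pow_mod ((j : ℕ) + 1) (zetam_pow_m m hm), pow_succ]
    field_simp
  · rw [mul_zero, zero_mul]

lemma trace_map_eval {n : Type*} [Fintype n] (M : Matrix n n (Polynomial ℂ)) (z : ℂ) :
    (M.map (Polynomial.eval z)).trace = Polynomial.eval z M.trace := by
  simp [Matrix.trace, Matrix.map_apply, Polynomial.eval_finset_sum, Matrix.diag]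

lemma Mmat_map (m : ℕ) (a b : Fin m → ℝ) (z : ℂ) (hz : z ≠ 0) :
    (Mmat m a b).map (Polynomial.eval z) = z • Umat m a b z := by
  ext i j
  simp only [Matrix.map_apply, Matrix.smul_apply, Mmat, Umat, Matrix.of_apply, smul_eq_mul]
  split_ifs <;> (try simp) <;> (try field_simp) <;> ring

lemma Mmat_deg (m : ℕ) (a b : Fin m → ℝ) (i j : Fin m) :
    ((Mmat m a b) i j).natDegree ≤ 2 := by
  simp only [Mmat, Matrix.of_apply]
  split_ifs
  · exact le_trans (Polynomial.natDegree_mul_le) (by simp)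
  · exact le_trans (Polynomial.natDegree_mul_le) (by simp)
  · simp
  · simp

lemma Mmat_pow_deg (m : ℕ) (a b : Fin m → ℝ) (k : ℕ) :
    ∀ i j : Fin m, ((Mmat m a b ^ k) i j).natDegree ≤ 2 * k := by
  induction k with
  | zero =>
      intro i j
      rcases eq_or_ne i j with h | h <;> simp [Matrix.one_apply, h]
  | succ k ih =>
      intro i j
      rw [pow_succ, Matrix.mul_apply]
      apply Polynomial.natDegree_sum_le_of_forall_le
      intro l _
      refine le_trans Polynomial.natDegree_mul_le ?_
      have := ih i l
      have := Mmat_deg m a b l j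
      omega

lemma comp_C_mul_X_coeff (p : Polynomial ℂ) (c : ℂ) (j : ℕ) :
    (p.comp (Polynomial.C c * Polynomial.X)).coeff j = c ^ j * p.coeff j := by
  rw [Polynomial.comp_eq_sum_left, Polynomial.sum, Polynomial.finset_sum_coeff]
  have : ∀ e ∈ p.support,
      (Polynomial.C (p.coeff e) * (Polynomial.C c * Polynomial.X) ^ e).coeff j
        = if e = j then c ^ j * p.coeff j else 0 := by
    intro e _
    rw [mul_pow, ← Polynomial.C_pow, ← mul_assoc, ← Polynomial.C_mul,
      Polynomial.coeff_C_mul_X_pow]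
    split_ifs with h1 h2 h2
    · rw [h1]; ring
    · omega
    · omega
    · rfl
  rw [Finset.sum_congr rfl this, Finset.sum_ite_eq' p.support j
    (fun _ => c ^ j * p.coeff j)]
  split_ifs with h
  · rfl
  · rw [Polynomial.notMem_support_iff.mp h, mul_zero]

lemma Umat_trace_pow_const (m : ℕ) (hm : 3 ≤ m) (a b : Fin m → ℝ) (k : ℕ) (hk : k < m)
    (z w : ℂ) (hz : z ≠ 0) (hw : w ≠ 0) :
    (Umat m a b z ^ k).trace = (Umat m a b w ^ k).trace := by
  set ζ := zetam m with hζdef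
  have hζ0 : ζ ≠ 0 := zetam_ne_zero m
  set G : Polynomial ℂ := (Mmat m a b ^ k).trace with hG
  have heval : ∀ u : ℂ, u ≠ 0 →
      Polynomial.eval u G = u ^ k * (Umat m a b u ^ k).trace := by
    intro u hu
    calc Polynomial.eval u G = ((Mmat m a b ^ k).map (Polynomial.eval u)).trace :=
          (trace_map_eval _ u).symm
    _ = (((Mmat m a b).map (Polynomial.eval u)) ^ k).trace := by
          have h := map_pow ((Polynomial.evalRingHom u).mapMatrix) (Mmat m a b) k
          simp only [RingHom.mapMatrix_apply, Polynomial.coe_evalRingHom] at h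
          rw [h]
    _ = ((u • Umat m a b u) ^ k).trace := by rw [Mmat_map m a b u hu]
    _ = u ^ k * (Umat m a b u ^ k).trace := by
          rw [_root_.smul_pow, Matrix.trace_smul, smul_eq_mul]
  have hsym : ∀ u : ℂ, u ≠ 0 →
      (Umat m a b u ^ k).trace = (Umat m a b (ζ⁻¹ * u) ^ k).trace := by
    intro u hu
    exact trace_pow_eq_of_conj (Matrix.diagonal fun t : Fin m => ζ ^ (t : ℕ))
      (Matrix.diagonal fun t : Fin m => (ζ⁻¹) ^ (t : ℕ)) _ _
      (diag_mul_diag_one _ _ (fun t => by rw [← mul_pow, mul_inv_cancel₀ hζ0, one_pow]))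
      (diag_mul_diag_one _ _ (fun t => by rw [← mul_pow, inv_mul_cancel₀ hζ0, one_pow]))
      (Zconj m hm a b u hu) k
  have hfun : Polynomial.X * (G.comp (Polynomial.C ζ * Polynomial.X)
      - Polynomial.C (ζ ^ k) * G) = 0 := by
    apply Polynomial.funext
    intro r
    rcases eq_or_ne r 0 with h0 | h0
    · simp [h0]
    · simp only [Polynomial.eval_mul, Polynomial.eval_sub, Polynomial.eval_comp,
        Polynomial.eval_C, Polynomial.eval_X, Polynomial.eval_zero]
      have h1 : Polynomial.eval (ζ * r) G = ζ ^ k * Polynomial.eval r G := by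
        rw [heval _ (mul_ne_zero hζ0 h0), heval _ h0,
          hsym (ζ * r) (mul_ne_zero hζ0 h0),
          show ζ⁻¹ * (ζ * r) = r by field_simp]
        ring
      rw [h1]
      ring
  have hcomp : G.comp (Polynomial.C ζ * Polynomial.X) = Polynomial.C (ζ ^ k) * G := by
    have hX : (Polynomial.X : Polynomial ℂ) ≠ 0 := Polynomial.X_ne_zero
    exact sub_eq_zero.mp ((mul_eq_zero.mp hfun).resolve_left hX)
  have hdeg : G.natDegree ≤ 2 * k := by
    rw [hG, Matrix.trace]
    exact Polynomial.natDegree_sum_le_of_forall_le _ _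
      (fun i _ => Mmat_pow_deg m a b k i i)
  have hcoeff : ∀ j : ℕ, j ≠ k → G.coeff j = 0 := by
    intro j hj
    rcases le_or_gt j (2 * k) with hle | hgt
    · by_contra hne
      have h1 : ζ ^ j * G.coeff j = ζ ^ k * G.coeff j := by
        have h := congrArg (fun p => Polynomial.coeff p j) hcomp
        simp only [comp_C_mul_X_coeff, Polynomial.coeff_C_mul] at h
        exact h
      have h2 : ζ ^ j = ζ ^ k := mul_right_cancel₀ hne h1
      rcases Nat.lt_or_ge j k with hlt | hge
      · have h3 : ζ ^ j * ζ ^ (k - j) = ζ ^ j * 1 := by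
          rw [← pow_add, mul_one, show j + (k - j) = k by omega, h2]
        have h4 : ζ ^ (k - j) = 1 := mul_left_cancel₀ (pow_ne_zero j hζ0) h3
        have h5 := zetam_pow_dvd m hm (k - j) h4
        have h6 := Int.le_of_dvd (by omega) h5
        omega
      · have hlt : k < j := by omega
        have h3 : ζ ^ k * ζ ^ (j - k) = ζ ^ k * 1 := by
          rw [← pow_add, mul_one, show k + (j - k) = j by omega, h2]
        have h4 : ζ ^ (j - k) = 1 := mul_left_cancel₀ (pow_ne_zero k hζ0) h3
        have h5 := zetam_pow_dvd m hm (j - k) h4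
        have h6 := Int.le_of_dvd (by omega) h5
        omega
    · exact Polynomial.coeff_eq_zero_of_natDegree_lt (lt_of_le_of_lt hdeg hgt)
  have hevalc : ∀ u : ℂ, Polynomial.eval u G = G.coeff k * u ^ k := by
    intro u
    rw [Polynomial.eval_eq_sum, Polynomial.sum]
    apply Finset.sum_eq_single k
    · intro e _ he
      rw [hcoeff e he, zero_mul]
    · intro h
      rw [Polynomial.notMem_support_iff.mp h, zero_mul]
  have e1 : (Umat m a b z ^ k).trace = G.coeff k := by
    have h := (heval z hz).symm.trans (hevalc z)
    apply mul_left_cancel₀ (pow_ne_zero k hz)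
    rw [h]
    ring
  have e2 : (Umat m a b w ^ k).trace = G.coeff k := by
    have h := (heval w hw).symm.trans (hevalc w)
    apply mul_left_cancel₀ (pow_ne_zero k hw)
    rw [h]
    ring
  rw [e1, e2]

/-- For a polynomial `P` of degree `< m`, the trace of `P(A_θ)` is independent
of the phase `θ`. -/
theorem trace_poly_periodicJacobi_phase_independent
    (m : ℕ) (hm : 3 ≤ m) (a b : Fin m → ℝ) (hb : ∀ t, 0 < b t)
    (P : Polynomial ℝ) (hP : P.natDegree < m) :
    ∀ θ : ℝ,
      Matrix.trace (Polynomial.aeval (periodicJacobi m a b θ) P)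
        = Matrix.trace (Polynomial.aeval (periodicJacobi m a b 0) P) := by
  intro θ
  have trkey : ∀ k, k < m →
      ((periodicJacobi m a b θ) ^ k).trace = ((periodicJacobi m a b 0) ^ k).trace := by
    intro k hk
    have conv : ∀ φ : ℝ, ((periodicJacobi m a b φ) ^ k).trace
        = ((Umat m a b (Complex.exp (-(Complex.I * φ / m)))) ^ k).trace := by
      intro φ
      exact trace_pow_eq_of_conj
        (Matrix.diagonal fun t : Fin m => Complex.exp (Complex.I * φ * t / m))
        (Matrix.diagonal fun t : Fin m => Complex.exp (-(Complex.I * φ * t / m))) _ _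
        (diag_mul_diag_one _ _ fun t => by rw [← Complex.exp_add]; simp)
        (diag_mul_diag_one _ _ fun t => by rw [← Complex.exp_add]; simp)
        (gaugeLem m hm a b φ) k
    rw [conv θ, conv 0]
    exact Umat_trace_pow_const m hm a b k hk _ _ (Complex.exp_ne_zero _) (Complex.exp_ne_zero _)
  rw [Polynomial.aeval_eq_sum_range (periodicJacobi m a b θ),
    Polynomial.aeval_eq_sum_range (periodicJacobi m a b 0),
    Matrix.trace_sum, Matrix.trace_sum]
  apply Finset.sum_congr rfl
  intro i hi
  have hi' : i < m := by
    have := Finset.mem_range.mp hi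
    omega
  rw [Matrix.trace_smul, Matrix.trace_smul, trkey i hi']
end
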